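/- arXiv:1704.03776 — 4 statements merged into one kernel-verified Lean document; each statement's English description precedes it below -/
import Mathlib

section
/- Let X_1,...,X_{t_n} be i.i.d. real random variables with P(|X| ≥ x) ≤ c·exp(-λ x^α) for all x ≥ 0, where λ > 0, α > 1, c ≥ 1. Then for any a > 0, P(Σ_{i=1}^{t_n} X_i ≥ a√n) ≤ c·t_n·exp(-λ n^α) + (c·n)^{t_n}·exp(-λ (a√n - t_n)^α / t_n^{α-1}) for all n with a√n ≥ t_n. -/
open MeasureTheory ProbabilityTheory Finset

private lemma weibull_convexity (tn : ℕ) (htn : 0 < tn) (α : ℝ) (hα : 1 ≤ α)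
    (z : Fin tn → ℝ) (hz : ∀ i, 0 ≤ z i) :
    (∑ i, z i) ^ α ≤ (tn : ℝ) ^ (α - 1) * ∑ i, z i ^ α := by
  have htn' : (0:ℝ) < tn := by exact_mod_cast htn
  have h := Real.rpow_arith_mean_le_arith_mean_rpow Finset.univ
    (fun _ : Fin tn => 1 / tn) z (fun i _ => by positivity)
    (by simp [Finset.sum_const]; field_simp) (fun i _ => hz i) hα
  have hsum : ∑ i, (1 / (tn:ℝ)) * z i = (1/tn) * ∑ i, z i := by
    rw [Finset.mul_sum]
  rw [hsum] at h
  have h2 : ((1/(tn:ℝ)) * ∑ i, z i) ^ α = ((tn:ℝ))⁻¹ ^ α * (∑ i, z i) ^ α := by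
    rw [one_div, Real.mul_rpow (by positivity) (Finset.sum_nonneg fun i _ => hz i)]
  rw [h2] at h
  have h3 : (∑ i, z i) ^ α ≤ (tn:ℝ) ^ α * ∑ i, (1/(tn:ℝ)) * z i ^ α := by
    calc (∑ i, z i) ^ α = (tn:ℝ) ^ α * (((tn:ℝ))⁻¹ ^ α * (∑ i, z i) ^ α) := by
          rw [← mul_assoc, ← Real.mul_rpow (le_of_lt htn') (by positivity),
            mul_inv_cancel₀ (ne_of_gt htn'), Real.one_rpow, one_mul]
      _ ≤ (tn:ℝ) ^ α * ∑ i, (1/(tn:ℝ)) * z i ^ α := by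
          exact mul_le_mul_of_nonneg_left h (by positivity)
  calc (∑ i, z i) ^ α ≤ (tn:ℝ) ^ α * ((1/(tn:ℝ)) * ∑ i, z i ^ α) := by
        rw [← Finset.mul_sum] at h3; exact h3
    _ = (tn:ℝ) ^ (α - 1) * ∑ i, z i ^ α := by
        rw [← mul_assoc, Real.rpow_sub htn', Real.rpow_one]
        ring

theorem weibull_sum_tail_bound
    {Ω : Type*} [MeasurableSpace Ω] (P : Measure Ω) [IsProbabilityMeasure P]
    (tn : ℕ) (htn : 0 < tn) (X : Fin tn → Ω → ℝ)
    (hmeas : ∀ i, Measurable (X i))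
    (hindep : iIndepFun X P)
    (hident : ∀ i j, Measure.map (X i) P = Measure.map (X j) P)
    (c lam α : ℝ) (hc : 1 ≤ c) (hlam : 0 < lam) (hα : 1 < α)
    (htail : ∀ i, ∀ x : ℝ, 0 ≤ x →
      (P {ω | x ≤ |X i ω|}).toReal ≤ c * Real.exp (-lam * x ^ α))
    (a : ℝ) (ha : 0 < a) (n : ℕ) (hn : (tn : ℝ) ≤ a * Real.sqrt n) :
    (P {ω | a * Real.sqrt n ≤ ∑ i, X i ω}).toReal ≤
      c * tn * Real.exp (-lam * (n : ℝ) ^ α) +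
        (c * n) ^ tn *
          Real.exp (-lam * (a * Real.sqrt n - tn) ^ α / (tn : ℝ) ^ (α - 1)) := by
  have htn' : (0:ℝ) < tn := by exact_mod_cast htn
  have hn1 : 0 < n := by
    by_contra h
    push_neg at h
    interval_cases n
    simp [Real.sqrt_zero] at hn
    nlinarith
  set s := a * Real.sqrt n with hs
  -- the big-value sets
  set A : Fin tn → Set Ω := fun i => {ω | (n:ℝ) ≤ |X i ω|} with hA
  -- the index set of lattice points
  set S : Finset (Fin tn → Fin n) :=
    Finset.univ.filter (fun k => s - tn ≤ ∑ i, ((k i : ℕ) : ℝ)) with hS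
  set B : (Fin tn → Fin n) → Set Ω :=
    fun k => ⋂ i, {ω | ((k i : ℕ) : ℝ) ≤ |X i ω|} with hB
  -- covering
  have hcover : {ω | s ≤ ∑ i, X i ω} ⊆ (⋃ i, A i) ∪ (⋃ k ∈ S, B k) := by
    intro ω hω
    simp only [Set.mem_setOf_eq] at hω
    by_cases hbig : ∃ i, (n:ℝ) ≤ |X i ω|
    · left
      obtain ⟨i, hi⟩ := hbig
      exact Set.mem_iUnion.2 ⟨i, hi⟩
    · right
      push_neg at hbig
      have hmlt : ∀ i, ⌊max (X i ω) 0⌋₊ < n := by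
        intro i
        rw [Nat.floor_lt (le_max_right _ _)]
        exact max_lt (lt_of_le_of_lt (le_abs_self _) (hbig i))
          (by exact_mod_cast hn1)
      set k : Fin tn → Fin n := fun i => ⟨⌊max (X i ω) 0⌋₊, hmlt i⟩ with hk
      have hkmem : k ∈ S := by
        rw [hS, Finset.mem_filter]
        refine ⟨Finset.mem_univ _, ?_⟩
        have h1 : ∀ i, X i ω - 1 ≤ ((k i : ℕ) : ℝ) := by
          intro i
          have := Nat.sub_one_lt_floor (max (X i ω) 0)
          have h2 : X i ω - 1 ≤ max (X i ω) 0 - 1 := by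
            simp [le_max_left]
          exact le_of_lt (lt_of_le_of_lt h2 this)
        have : ∑ i, (X i ω - 1) ≤ ∑ i, ((k i : ℕ) : ℝ) :=
          Finset.sum_le_sum fun i _ => h1 i
        rw [Finset.sum_sub_distrib] at this
        simp only [Finset.sum_const, Finset.card_univ, Fintype.card_fin,
          nsmul_eq_mul, mul_one] at this
        linarith
      refine Set.mem_biUnion hkmem ?_
      rw [hB]
      refine Set.mem_iInter.2 fun i => ?_
      simp only [Set.mem_setOf_eq]
      calc ((k i : ℕ) : ℝ) ≤ max (X i ω) 0 := Nat.floor_le (le_max_right _ _)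
        _ ≤ |X i ω| := max_le (le_abs_self _) (abs_nonneg _)
  -- measure bound in ℝ≥0∞
  have hmeasure : P {ω | s ≤ ∑ i, X i ω} ≤
      (∑ i, P (A i)) + ∑ k ∈ S, P (B k) := by
    calc P {ω | s ≤ ∑ i, X i ω} ≤ P ((⋃ i, A i) ∪ (⋃ k ∈ S, B k)) :=
          measure_mono hcover
      _ ≤ P (⋃ i, A i) + P (⋃ k ∈ S, B k) := measure_union_le _ _
      _ ≤ (∑ i, P (A i)) + ∑ k ∈ S, P (B k) :=
          add_le_add (measure_iUnion_fintype_le _ _) (measure_biUnion_finset_le _ _)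
  -- independence: product formula for B k
  have hBk : ∀ k : Fin tn → Fin n, P (B k) = ∏ i, P {ω | ((k i : ℕ) : ℝ) ≤ |X i ω|} := by
    intro k
    rw [hB]
    apply hindep.meas_iInter
    intro i
    refine ⟨{x : ℝ | ((k i : ℕ) : ℝ) ≤ |x|}, ?_, rfl⟩
    exact measurableSet_le measurable_const measurable_abs
  -- bound for each B k with k ∈ S
  have hexp_pos : 0 < Real.exp (-lam * (s - tn) ^ α / (tn : ℝ) ^ (α - 1)) := Real.exp_pos _
  have hBkbound : ∀ k ∈ S, (P (B k)).toReal ≤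
      c ^ tn * Real.exp (-lam * (s - tn) ^ α / (tn : ℝ) ^ (α - 1)) := by
    intro k hk
    rw [hBk k, ENNReal.toReal_prod]
    have step1 : ∏ i, (P {ω | ((k i : ℕ) : ℝ) ≤ |X i ω|}).toReal ≤
        ∏ i, c * Real.exp (-lam * ((k i : ℕ) : ℝ) ^ α) := by
      apply Finset.prod_le_prod (fun i _ => ENNReal.toReal_nonneg)
      intro i _
      exact htail i _ (Nat.cast_nonneg _)
    refine le_trans step1 ?_
    rw [Finset.prod_mul_distrib, Finset.prod_const, Finset.card_univ, Fintype.card_fin,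
      ← Real.exp_sum]
    apply mul_le_mul_of_nonneg_left _ (by positivity)
    apply Real.exp_le_exp.2
    have hsum_exp : ∑ i, -lam * ((k i : ℕ) : ℝ) ^ α = -lam * ∑ i, ((k i : ℕ) : ℝ) ^ α := by
      rw [Finset.mul_sum]
    rw [hsum_exp]
    -- need : -lam * ∑ k_i^α ≤ -lam * (s - tn)^α / tn^(α-1)
    have hstn : (0:ℝ) ≤ s - tn := by linarith
    have hksum : s - tn ≤ ∑ i, ((k i : ℕ) : ℝ) := by
      rw [hS, Finset.mem_filter] at hk
      exact hk.2
    have hconv := weibull_convexity tn htn α (le_of_lt hα)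
      (fun i => ((k i : ℕ) : ℝ)) (fun i => Nat.cast_nonneg _)
    have hmono : (s - tn) ^ α ≤ (∑ i, ((k i : ℕ) : ℝ)) ^ α :=
      Real.rpow_le_rpow hstn hksum (by linarith)
    have htnpow : (0:ℝ) < (tn:ℝ) ^ (α - 1) := Real.rpow_pos_of_pos htn' _
    rw [neg_mul, neg_mul, neg_div, neg_le_neg_iff]
    rw [div_le_iff₀ htnpow]
    calc lam * (s - tn) ^ α ≤ lam * ((tn:ℝ) ^ (α-1) * ∑ i, ((k i : ℕ) : ℝ) ^ α) := by
          apply mul_le_mul_of_nonneg_left _ (le_of_lt hlam)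
          exact le_trans hmono hconv
      _ = lam * (∑ i, ((k i : ℕ) : ℝ) ^ α) * (tn:ℝ) ^ (α-1) := by ring
  -- bound for each A i
  have hAbound : ∀ i, (P (A i)).toReal ≤ c * Real.exp (-lam * (n:ℝ) ^ α) := by
    intro i
    exact htail i (n:ℝ) (Nat.cast_nonneg _)
  -- finiteness
  have hfin : (∑ i, P (A i)) + ∑ k ∈ S, P (B k) ≠ ⊤ := by
    apply ENNReal.add_ne_top.2
    constructor
    · exact (ne_of_lt (lt_of_le_of_lt (Finset.sum_le_sum fun i _ => prob_le_one)
        (by simp)))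
    · exact (ne_of_lt (lt_of_le_of_lt (Finset.sum_le_sum fun k _ => prob_le_one)
        (by simp)))
  have htoReal : (P {ω | s ≤ ∑ i, X i ω}).toReal ≤
      (∑ i, (P (A i)).toReal) + ∑ k ∈ S, (P (B k)).toReal := by
    have := ENNReal.toReal_mono hfin hmeasure
    rwa [ENNReal.toReal_add (by
        exact ne_top_of_le_ne_top hfin le_self_add) (by
        exact ne_top_of_le_ne_top hfin le_add_self),
      ENNReal.toReal_sum (fun i _ => measure_ne_top _ _),
      ENNReal.toReal_sum (fun k _ => measure_ne_top _ _)] at this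
  refine le_trans htoReal (add_le_add ?_ ?_)
  · calc ∑ i, (P (A i)).toReal ≤ ∑ _i : Fin tn, c * Real.exp (-lam * (n:ℝ) ^ α) :=
        Finset.sum_le_sum fun i _ => hAbound i
      _ = c * tn * Real.exp (-lam * (n:ℝ) ^ α) := by
        rw [Finset.sum_const, Finset.card_univ, Fintype.card_fin, nsmul_eq_mul]
        ring
  · calc ∑ k ∈ S, (P (B k)).toReal ≤
        ∑ _k ∈ S, c ^ tn * Real.exp (-lam * (s - tn) ^ α / (tn : ℝ) ^ (α - 1)) :=
          Finset.sum_le_sum hBkbound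
      _ = S.card * (c ^ tn * Real.exp (-lam * (s - tn) ^ α / (tn : ℝ) ^ (α - 1))) := by
          rw [Finset.sum_const, nsmul_eq_mul]
      _ ≤ (n ^ tn : ℕ) * (c ^ tn * Real.exp (-lam * (s - tn) ^ α / (tn : ℝ) ^ (α - 1))) := by
          apply mul_le_mul_of_nonneg_right _ (by positivity)
          have : S.card ≤ (Finset.univ : Finset (Fin tn → Fin n)).card :=
            Finset.card_le_card (Finset.filter_subset _ _)
          rw [Finset.card_univ] at this
          simp only [Fintype.card_fun, Fintype.card_fin] at this
          exact_mod_cast this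
      _ = (c * n) ^ tn * Real.exp (-lam * (s - tn) ^ α / (tn : ℝ) ^ (α - 1)) := by
          rw [mul_pow]
          push_cast
          ring
end

section
/- Let ν be the standard Gaussian measure on ℝ and A a nonempty finite union of intervals with p ∈ (0,1). Define J_A(p) = inf{y ∈ [0,1] : sup_{x∈ℝ} ν((A-x)/√(1-y)) ≥ p}. Then 0 ≤ J_A(p) < 1, and there exist x ∈ ℝ and r ∈ [0,1) with r = J_A(p) and ν((A-x)/√(1-r)) ≥ p. -/
set_option maxHeartbeats 1000000

open MeasureTheory ProbabilityTheory Set Real Filter Topology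
open scoped NNReal ENNReal

namespace JAaux

def IsPiece (s : Set ℝ) : Prop :=
  (∃ a : ℝ, s = Iic a) ∨ (∃ a b : ℝ, s = Ioc a b) ∨ (∃ a : ℝ, s = Ioi a)

lemma piece_inter {s t : Set ℝ} (hs : IsPiece s) (ht : IsPiece t) : IsPiece (s ∩ t) := by
  rcases hs with ⟨a, rfl⟩ | ⟨a, b, rfl⟩ | ⟨a, rfl⟩ <;>
    rcases ht with ⟨c, rfl⟩ | ⟨c, d, rfl⟩ | ⟨c, rfl⟩
  · exact Or.inl ⟨min a c, by ext x; simp only [mem_inter_iff, mem_Iic, le_min_iff]⟩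
  · exact Or.inr (Or.inl ⟨c, min a d, by
      ext x; simp only [mem_inter_iff, mem_Iic, mem_Ioc, le_min_iff]; tauto⟩)
  · exact Or.inr (Or.inl ⟨c, a, by
      ext x; simp only [mem_inter_iff, mem_Iic, mem_Ioc, mem_Ioi]; tauto⟩)
  · exact Or.inr (Or.inl ⟨a, min b c, by
      ext x; simp only [mem_inter_iff, mem_Iic, mem_Ioc, le_min_iff]; tauto⟩)
  · exact Or.inr (Or.inl ⟨max a c, min b d, by
      ext x; simp only [mem_inter_iff, mem_Ioc, le_min_iff, max_lt_iff]; tauto⟩)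
  · exact Or.inr (Or.inl ⟨max a c, b, by
      ext x; simp only [mem_inter_iff, mem_Ioc, mem_Ioi, max_lt_iff]; tauto⟩)
  · exact Or.inr (Or.inl ⟨a, c, by
      ext x; simp only [mem_inter_iff, mem_Ioi, mem_Iic, mem_Ioc]⟩)
  · exact Or.inr (Or.inl ⟨max a c, d, by
      ext x; simp only [mem_inter_iff, mem_Ioi, mem_Ioc, max_lt_iff]; tauto⟩)
  · exact Or.inr (Or.inr ⟨max a c, by
      ext x; simp only [mem_inter_iff, mem_Ioi, max_lt_iff]⟩)

def Nice (A : Set ℝ) : Prop :=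
  ∃ l : List (Set ℝ), (∀ s ∈ l, IsPiece s) ∧ A = {x | ∃ s ∈ l, x ∈ s}

lemma nice_union {A B : Set ℝ} (hA : Nice A) (hB : Nice B) : Nice (A ∪ B) := by
  obtain ⟨l₁, h₁, rfl⟩ := hA
  obtain ⟨l₂, h₂, rfl⟩ := hB
  refine ⟨l₁ ++ l₂, ?_, ?_⟩
  · intro s hs; rcases List.mem_append.1 hs with h | h
    exacts [h₁ s h, h₂ s h]
  · ext x
    constructor
    · rintro (⟨s, hs, hx⟩ | ⟨s, hs, hx⟩)
      exacts [⟨s, List.mem_append.2 (Or.inl hs), hx⟩, ⟨s, List.mem_append.2 (Or.inr hs), hx⟩]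
    · rintro ⟨s, hs, hx⟩
      rcases List.mem_append.1 hs with h | h
      exacts [Or.inl ⟨s, h, hx⟩, Or.inr ⟨s, h, hx⟩]

lemma nice_inter {A B : Set ℝ} (hA : Nice A) (hB : Nice B) : Nice (A ∩ B) := by
  obtain ⟨l₁, h₁, rfl⟩ := hA
  obtain ⟨l₂, h₂, rfl⟩ := hB
  refine ⟨l₁.flatMap fun s => l₂.map fun t => s ∩ t, ?_, ?_⟩
  · intro u hu
    simp only [List.mem_flatMap, List.mem_map] at hu
    obtain ⟨s, hs, t, ht, rfl⟩ := hu
    exact piece_inter (h₁ s hs) (h₂ t ht)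
  · ext x
    simp only [mem_inter_iff, mem_setOf_eq, List.mem_flatMap, List.mem_map]
    constructor
    · rintro ⟨⟨s, hs, hxs⟩, ⟨t, ht, hxt⟩⟩
      exact ⟨s ∩ t, ⟨s, hs, t, ht, rfl⟩, hxs, hxt⟩
    · rintro ⟨u, ⟨s, hs, t, ht, rfl⟩, hxs, hxt⟩
      exact ⟨⟨s, hs, hxs⟩, ⟨t, ht, hxt⟩⟩

lemma nice_piece_compl {s : Set ℝ} (hs : IsPiece s) : Nice sᶜ := by
  rcases hs with ⟨a, rfl⟩ | ⟨a, b, rfl⟩ | ⟨a, rfl⟩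
  · refine ⟨[Ioi a], ?_, by ext x; simp⟩
    intro u hu; rw [List.mem_singleton] at hu; subst hu
    exact Or.inr (Or.inr ⟨a, rfl⟩)
  · refine ⟨[Iic a, Ioi b], ?_, ?_⟩
    · intro u hu
      simp only [List.mem_cons, List.mem_singleton, List.not_mem_nil, or_false] at hu
      rcases hu with rfl | rfl
      · exact Or.inl ⟨a, rfl⟩
      · exact Or.inr (Or.inr ⟨b, rfl⟩)
    · ext x
      simp only [mem_compl_iff, mem_Ioc, mem_setOf_eq, List.mem_cons, List.mem_singleton,
        List.not_mem_nil, or_false, mem_Iic, mem_Ioi]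
      constructor
      · intro h
        push_neg at h
        rcases le_or_gt x a with h' | h'
        · exact ⟨Iic a, Or.inl rfl, h'⟩
        · exact ⟨Ioi b, Or.inr rfl, h h'⟩
      · rintro ⟨u, (rfl | rfl), hxu⟩ ⟨h1, h2⟩
        · exact absurd hxu (by simpa using h1)
        · exact absurd hxu (by simpa using h2)
  · refine ⟨[Iic a], ?_, by ext x; simp⟩
    intro u hu; rw [List.mem_singleton] at hu; subst hu
    exact Or.inl ⟨a, rfl⟩

lemma nice_univ : Nice (univ : Set ℝ) := by
  refine ⟨[Iic 0, Ioi 0], ?_, ?_⟩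
  · intro u hu
    simp only [List.mem_cons, List.mem_singleton, List.not_mem_nil, or_false] at hu
    rcases hu with rfl | rfl
    · exact Or.inl ⟨0, rfl⟩
    · exact Or.inr (Or.inr ⟨0, rfl⟩)
  · ext x
    simp only [mem_univ, true_iff, mem_setOf_eq, List.mem_cons, List.mem_singleton,
      List.not_mem_nil, or_false]
    rcases le_or_gt x 0 with h | h
    · exact ⟨Iic 0, Or.inl rfl, h⟩
    · exact ⟨Ioi 0, Or.inr rfl, h⟩

lemma cons_setOf (s : Set ℝ) (t : List (Set ℝ)) :
    {x : ℝ | ∃ u ∈ s :: t, x ∈ u} = s ∪ {x | ∃ u ∈ t, x ∈ u} := by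
  ext x; simp only [mem_union, mem_setOf_eq, List.mem_cons]
  constructor
  · rintro ⟨u, (rfl | hu), hxu⟩
    exacts [Or.inl hxu, Or.inr ⟨u, hu, hxu⟩]
  · rintro (h | ⟨u, hu, hxu⟩)
    exacts [⟨s, Or.inl rfl, h⟩, ⟨u, Or.inr hu, hxu⟩]

lemma nice_compl {A : Set ℝ} (hA : Nice A) : Nice Aᶜ := by
  obtain ⟨l, hl, rfl⟩ := hA
  induction l with
  | nil => simpa using nice_univ
  | cons s t ih =>
    rw [cons_setOf, compl_union]
    exact nice_inter (nice_piece_compl (hl s List.mem_cons_self))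
      (ih fun u hu => hl u (List.mem_cons_of_mem s hu))

lemma nice_of_mem {A : Set ℝ}
    (hA : A ∈ MeasureTheory.generateSetAlgebra {s : Set ℝ | ∃ x, s = Set.Iic x}) : Nice A := by
  induction hA with
  | base s hs =>
    obtain ⟨a, rfl⟩ := hs
    refine ⟨[Iic a], ?_, by ext x; simp⟩
    intro u hu; rw [List.mem_singleton] at hu; subst hu
    exact Or.inl ⟨a, rfl⟩
  | empty => exact ⟨[], by simp, by ext x; simp⟩
  | compl s _ ih => exact nice_compl ih
  | union s t _ _ ihs iht => exact nice_union ihs iht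

lemma nice_measurable {A : Set ℝ} (hA : Nice A) : MeasurableSet A := by
  obtain ⟨l, hl, rfl⟩ := hA
  induction l with
  | nil => simpa using MeasurableSet.empty
  | cons s t ih =>
    rw [cons_setOf]
    refine MeasurableSet.union ?_ (ih fun u hu => hl u (List.mem_cons_of_mem s hu))
    rcases hl s List.mem_cons_self with ⟨a, rfl⟩ | ⟨a, b, rfl⟩ | ⟨a, rfl⟩
    exacts [measurableSet_Iic, measurableSet_Ioc, measurableSet_Ioi]

lemma nice_bounded {l : List (Set ℝ)} (hl : ∀ s ∈ l, ∃ a b : ℝ, s = Ioc a b) :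
    ∃ lo hi : ℝ, {x : ℝ | ∃ s ∈ l, x ∈ s} ⊆ Icc lo hi := by
  induction l with
  | nil => exact ⟨0, 0, by intro x hx; simp at hx⟩
  | cons s t ih =>
    obtain ⟨lo, hi, hih⟩ := ih fun u hu => hl u (List.mem_cons_of_mem s hu)
    obtain ⟨a, b, hab⟩ := hl s List.mem_cons_self
    subst hab
    refine ⟨min a lo, max b hi, ?_⟩
    rintro x ⟨u, hu, hxu⟩
    rcases List.mem_cons.1 hu with rfl | hu
    · obtain ⟨h1, h2⟩ := hxu
      exact ⟨le_trans (min_le_left _ _) h1.le, le_trans h2 (le_max_left _ _)⟩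
    · obtain ⟨h1, h2⟩ := hih ⟨u, hu, hxu⟩
      exact ⟨le_trans (min_le_right _ _) h1, le_trans h2 (le_max_right _ _)⟩

lemma nice_cases {A : Set ℝ} (hA : Nice A) (hne : A.Nonempty) :
    (∃ a : ℝ, Iic a ⊆ A) ∨ (∃ a : ℝ, Ioi a ⊆ A) ∨
      (∃ lo hi a b : ℝ, a < b ∧ Ioo a b ⊆ A ∧ A ⊆ Icc lo hi) := by
  obtain ⟨l, hl, rfl⟩ := hA
  by_cases h : ∃ s ∈ l, (∃ a : ℝ, s = Iic a) ∨ (∃ a : ℝ, s = Ioi a)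
  · obtain ⟨s, hs, hcase⟩ := h
    rcases hcase with ⟨a, rfl⟩ | ⟨a, rfl⟩
    · exact Or.inl ⟨a, fun x hx => ⟨Iic a, hs, hx⟩⟩
    · exact Or.inr (Or.inl ⟨a, fun x hx => ⟨Ioi a, hs, hx⟩⟩)
  · push_neg at h
    have hioc : ∀ s ∈ l, ∃ a b : ℝ, s = Ioc a b := by
      intro s hs
      rcases hl s hs with ⟨a, rfl⟩ | good | ⟨a, rfl⟩
      · exact absurd rfl ((h _ hs).1 a)
      · exact good
      · exact absurd rfl ((h _ hs).2 a)
    obtain ⟨lo, hi, hbd⟩ := nice_bounded hioc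
    obtain ⟨x, s, hs, hxs⟩ := hne
    obtain ⟨a, b, hab⟩ := hioc s hs
    subst hab
    refine Or.inr (Or.inr ⟨lo, hi, a, b, lt_of_lt_of_le hxs.1 hxs.2, ?_, hbd⟩)
    intro z hz
    exact ⟨Ioc a b, hs, hz.1, hz.2.le⟩

end JAaux

namespace JAaux

lemma toReal_mono' {μ : Measure ℝ} [IsFiniteMeasure μ] {s t : Set ℝ} (h : s ⊆ t) :
    (μ s).toReal ≤ (μ t).toReal :=
  ENNReal.toReal_mono (measure_ne_top μ t) (measure_mono h)

lemma image_eq_preimage (A : Set ℝ) {x s : ℝ} (hs : 0 < s) :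
    (fun z => (z - x) / s) '' A = (fun w => s * w + x) ⁻¹' A := by
  ext w
  simp only [mem_image, mem_preimage]
  constructor
  · rintro ⟨z, hz, rfl⟩
    have hzz : s * ((z - x) / s) + x = z := by field_simp; ring
    rwa [hzz]
  · intro hw
    exact ⟨s * w + x, hw, by field_simp; ring⟩

lemma image_Iic {x s : ℝ} (hs : 0 < s) (a : ℝ) :
    (fun z => (z - x) / s) '' Iic a = Iic ((a - x) / s) := by
  rw [image_eq_preimage _ hs]
  ext w
  simp only [mem_preimage, mem_Iic]
  rw [le_div_iff₀ hs]
  constructor <;> intro h <;> nlinarith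

lemma image_Ici {x s : ℝ} (hs : 0 < s) (a : ℝ) :
    (fun z => (z - x) / s) '' Ici a = Ici ((a - x) / s) := by
  rw [image_eq_preimage _ hs]
  ext w
  simp only [mem_preimage, mem_Ici]
  rw [div_le_iff₀ hs]
  constructor <;> intro h <;> nlinarith

lemma image_Ioi {x s : ℝ} (hs : 0 < s) (a : ℝ) :
    (fun z => (z - x) / s) '' Ioi a = Ioi ((a - x) / s) := by
  rw [image_eq_preimage _ hs]
  ext w
  simp only [mem_preimage, mem_Ioi]
  rw [div_lt_iff₀ hs]
  constructor <;> intro h <;> nlinarith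

lemma image_Ioo {x s : ℝ} (hs : 0 < s) (a b : ℝ) :
    (fun z => (z - x) / s) '' Ioo a b = Ioo ((a - x) / s) ((b - x) / s) := by
  rw [image_eq_preimage _ hs]
  ext w
  simp only [mem_preimage, mem_Ioo]
  rw [div_lt_iff₀ hs, lt_div_iff₀ hs]
  constructor <;> rintro ⟨h1, h2⟩ <;> constructor <;> nlinarith

lemma gauss_image_eq {A : Set ℝ} (hA : MeasurableSet A) {v : ℝ} (hv : 0 < v) (x : ℝ) :
    (gaussianReal 0 1) ((fun z => (z - x) / Real.sqrt v) '' A)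
      = gaussianReal x v.toNNReal A := by
  have hs : 0 < Real.sqrt v := Real.sqrt_pos.mpr hv
  rw [image_eq_preimage _ hs]
  have hmeas : Measurable fun w : ℝ => Real.sqrt v * w + x := by fun_prop
  rw [← Measure.map_apply hmeas hA]
  have hg : Measurable fun w : ℝ => w + x := by fun_prop
  have hf : Measurable fun w : ℝ => Real.sqrt v * w := by fun_prop
  have hc : (fun w : ℝ => Real.sqrt v * w + x)
      = ((fun w : ℝ => w + x) ∘ (fun w : ℝ => Real.sqrt v * w)) := rfl
  have hvv : (⟨Real.sqrt v ^ 2, sq_nonneg _⟩ : ℝ≥0) * 1 = v.toNNReal := by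
    refine NNReal.coe_injective ?_
    simp only [NNReal.coe_mul, NNReal.coe_one, mul_one, NNReal.coe_mk,
      Real.coe_toNNReal _ hv.le]
    exact Real.sq_sqrt hv.le
  rw [hc, ← Measure.map_map hg hf,
    gaussianReal_map_const_mul (μ := 0) (v := 1) (Real.sqrt v),
    gaussianReal_map_add_const x, mul_zero, zero_add]
  exact congrArg (fun w : ℝ≥0 => (gaussianReal x w) A) hvv

lemma gauss_toReal (μ0 : ℝ) {v : ℝ≥0} (hv : v ≠ 0) (s : Set ℝ) :
    ((gaussianReal μ0 v) s).toReal = ∫ z in s, gaussianPDFReal μ0 v z := by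
  rw [gaussianReal_apply_eq_integral _ hv s]
  exact ENNReal.toReal_ofReal (integral_nonneg fun z => gaussianPDFReal_nonneg _ _ _)

lemma g_eq {A : Set ℝ} (hAm : MeasurableSet A) {y : ℝ} (hy : y < 1) (x : ℝ) :
    ((gaussianReal 0 1) ((fun z => (z - x) / Real.sqrt (1 - y)) '' A)).toReal
      = ∫ z in A, gaussianPDFReal x (1 - y).toNNReal z := by
  have h1 : (0:ℝ) < 1 - y := by linarith
  rw [gauss_image_eq hAm h1, gauss_toReal _ (ne_of_gt (Real.toNNReal_pos.mpr h1))]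

lemma iInter_Iic_empty : (⋂ n : ℕ, Iic (-(n:ℝ))) = ∅ := by
  ext x
  simp only [mem_iInter, mem_Iic, mem_empty_iff_false, iff_false, not_forall, not_le]
  obtain ⟨n, hn⟩ := exists_nat_gt (-x)
  exact ⟨n, by linarith⟩

lemma iInter_Ioi_empty : (⋂ n : ℕ, Ioi ((n:ℝ))) = ∅ := by
  ext x
  simp only [mem_iInter, mem_Ioi, mem_empty_iff_false, iff_false, not_forall, not_lt]
  obtain ⟨n, hn⟩ := exists_nat_gt x
  exact ⟨n, hn.le⟩

lemma tendsto_Iic_zero :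
    Tendsto (fun n : ℕ => ((gaussianReal 0 1) (Iic (-(n:ℝ)))).toReal) atTop (𝓝 0) := by
  have h := tendsto_measure_iInter_atTop (μ := gaussianReal 0 1)
    (s := fun n : ℕ => Iic (-(n:ℝ)))
    (fun n => measurableSet_Iic.nullMeasurableSet)
    (fun m n hmn => Iic_subset_Iic.2 (by exact_mod_cast neg_le_neg (Nat.cast_le.2 hmn)))
    ⟨0, measure_ne_top _ _⟩
  rw [iInter_Iic_empty, measure_empty] at h
  have := (ENNReal.tendsto_toReal (by simp)).comp h
  simpa [Function.comp_def] using this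

lemma tendsto_Ioi_zero :
    Tendsto (fun n : ℕ => ((gaussianReal 0 1) (Ioi ((n:ℝ)))).toReal) atTop (𝓝 0) := by
  have h := tendsto_measure_iInter_atTop (μ := gaussianReal 0 1)
    (s := fun n : ℕ => Ioi ((n:ℝ)))
    (fun n => measurableSet_Ioi.nullMeasurableSet)
    (fun m n hmn => Ioi_subset_Ioi (by exact_mod_cast hmn))
    ⟨0, measure_ne_top _ _⟩
  rw [iInter_Ioi_empty, measure_empty] at h
  have := (ENNReal.tendsto_toReal (by simp)).comp h
  simpa [Function.comp_def] using this

lemma tendsto_Iic_one :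
    Tendsto (fun n : ℕ => ((gaussianReal 0 1) (Iic ((n:ℝ)))).toReal) atTop (𝓝 1) := by
  have hu : (⋃ n : ℕ, Iic ((n:ℝ))) = univ := by
    ext x
    simp only [mem_iUnion, mem_Iic, mem_univ, iff_true]
    obtain ⟨n, hn⟩ := exists_nat_gt x
    exact ⟨n, hn.le⟩
  have h := tendsto_measure_iUnion_atTop (μ := gaussianReal 0 1)
    (s := fun n : ℕ => Iic ((n:ℝ))) (fun m n hmn => Iic_subset_Iic.2 (by exact_mod_cast hmn))
  rw [hu, measure_univ] at h
  have := (ENNReal.tendsto_toReal (by simp)).comp h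
  simpa [Function.comp_def] using this

lemma tendsto_Ioi_one :
    Tendsto (fun n : ℕ => ((gaussianReal 0 1) (Ioi (-(n:ℝ)))).toReal) atTop (𝓝 1) := by
  have hu : (⋃ n : ℕ, Ioi (-(n:ℝ))) = univ := by
    ext x
    simp only [mem_iUnion, mem_Ioi, mem_univ, iff_true]
    obtain ⟨n, hn⟩ := exists_nat_gt (-x)
    exact ⟨n, by linarith⟩
  have h := tendsto_measure_iUnion_atTop (μ := gaussianReal 0 1)
    (s := fun n : ℕ => Ioi (-(n:ℝ)))
    (fun m n hmn => Ioi_subset_Ioi (by exact_mod_cast neg_le_neg (Nat.cast_le.2 hmn)))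
  rw [hu, measure_univ] at h
  have := (ENNReal.tendsto_toReal (by simp)).comp h
  simpa [Function.comp_def] using this

lemma tendsto_Ioo_one :
    Tendsto (fun n : ℕ => ((gaussianReal 0 1) (Ioo (-(n:ℝ)) (n:ℝ))).toReal) atTop (𝓝 1) := by
  have hu : (⋃ n : ℕ, Ioo (-(n:ℝ)) (n:ℝ)) = univ := by
    ext x
    simp only [mem_iUnion, mem_Ioo, mem_univ, iff_true]
    obtain ⟨n, hn⟩ := exists_nat_gt (|x|)
    exact ⟨n, by cases abs_lt.mp hn; constructor <;> linarith⟩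
  have h := tendsto_measure_iUnion_atTop (μ := gaussianReal 0 1)
    (s := fun n : ℕ => Ioo (-(n:ℝ)) (n:ℝ))
    (fun m n hmn => Ioo_subset_Ioo (by exact_mod_cast neg_le_neg (Nat.cast_le.2 hmn))
      (by exact_mod_cast hmn))
  rw [hu, measure_univ] at h
  have := (ENNReal.tendsto_toReal (by simp)).comp h
  simpa [Function.comp_def] using this

end JAaux
namespace JAaux

lemma pdf_bound (μ0 : ℝ) {v0 : ℝ≥0} (hv0 : 0 < (v0:ℝ)) (μ : ℝ) (v : ℝ≥0)
    (hμ : |μ - μ0| ≤ 1) (h1 : (v0:ℝ)/2 ≤ (v:ℝ)) (h2 : (v:ℝ) ≤ 2*(v0:ℝ)) (z : ℝ) :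
    gaussianPDFReal μ v z ≤
      ((Real.sqrt (π * v0))⁻¹ * Real.exp (1/(4*(v0:ℝ))) * Real.sqrt (2*π*((4*v0 : ℝ≥0):ℝ))) *
        gaussianPDFReal μ0 (4*v0) z := by
  have hπ := Real.pi_pos
  have hv : (0:ℝ) < (v:ℝ) := by linarith
  have hc4 : ((4*v0 : ℝ≥0):ℝ) = 4*(v0:ℝ) := by push_cast; ring
  rw [gaussianPDFReal, gaussianPDFReal, hc4]
  have hsq : (0:ℝ) < Real.sqrt (2*π*(4*(v0:ℝ))) := Real.sqrt_pos.mpr (by positivity)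
  rw [show ((Real.sqrt (π * v0))⁻¹ * Real.exp (1/(4*(v0:ℝ))) * Real.sqrt (2*π*(4*(v0:ℝ)))) *
      ((Real.sqrt (2*π*(4*(v0:ℝ))))⁻¹ * Real.exp (- (z - μ0)^2 / (2 * (4*(v0:ℝ)))))
      = (Real.sqrt (2*π*(4*(v0:ℝ))) * (Real.sqrt (2*π*(4*(v0:ℝ))))⁻¹) *
        ((Real.sqrt (π * v0))⁻¹ * (Real.exp (1/(4*(v0:ℝ))) *
          Real.exp (- (z - μ0)^2 / (2 * (4*(v0:ℝ)))))) from by ring,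
    mul_inv_cancel₀ (ne_of_gt hsq), one_mul, ← Real.exp_add]
  have hinv : (Real.sqrt (2*π*(v:ℝ)))⁻¹ ≤ (Real.sqrt (π * (v0:ℝ)))⁻¹ := by
    apply inv_anti₀ (Real.sqrt_pos.mpr (by positivity))
    apply Real.sqrt_le_sqrt
    nlinarith
  have hexp : Real.exp (- (z - μ)^2 / (2 * (v:ℝ)))
      ≤ Real.exp (1/(4*(v0:ℝ)) + - (z - μ0)^2 / (2 * (4*(v0:ℝ)))) := by
    apply Real.exp_le_exp.mpr
    have habs := abs_le.mp hμ
    have e1 : - (z - μ)^2 / (2 * (v:ℝ)) ≤ - (z - μ)^2 / (4*(v0:ℝ)) := by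
      rw [div_le_div_iff₀ (by linarith) (by linarith)]
      nlinarith [sq_nonneg (z - μ)]
    have e2 : - (z - μ)^2 / (4*(v0:ℝ)) ≤ 1/(4*(v0:ℝ)) + - (z - μ0)^2 / (2 * (4*(v0:ℝ))) := by
      rw [show (1:ℝ)/(4*(v0:ℝ)) + - (z - μ0)^2 / (2 * (4*(v0:ℝ)))
          = (2 - (z - μ0)^2) / (8*(v0:ℝ)) from by ring,
        show - (z - μ)^2 / (4*(v0:ℝ)) = (-2 * (z - μ)^2) / (8*(v0:ℝ)) from by ring,
        div_le_div_iff₀ (by linarith) (by linarith)]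
      have hm : (μ - μ0)^2 ≤ 1 := by nlinarith [habs.1, habs.2]
      have key : (z - μ0)^2 ≤ 2*(z - μ)^2 + 2 := by
        nlinarith [sq_nonneg (z - μ - (μ - μ0)), hm]
      have := mul_le_mul_of_nonneg_right
        (by linarith : -2*(z - μ)^2 ≤ 2 - (z - μ0)^2) (by positivity : (0:ℝ) ≤ 8*(v0:ℝ))
      linarith
    linarith
  calc (Real.sqrt (2*π*(v:ℝ)))⁻¹ * Real.exp (- (z - μ)^2 / (2 * (v:ℝ)))
      ≤ (Real.sqrt (π * (v0:ℝ)))⁻¹ * Real.exp (1/(4*(v0:ℝ)) + - (z - μ0)^2 / (2 * (4*(v0:ℝ)))) := by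
        apply mul_le_mul hinv hexp (Real.exp_pos _).le (by positivity)
  
lemma tendsto_integral_gauss (A : Set ℝ) (μk : ℕ → ℝ) (vk : ℕ → ℝ≥0) (μ0 : ℝ) (v0 : ℝ≥0)
    (hv0 : 0 < (v0 : ℝ))
    (hμ : Tendsto μk atTop (𝓝 μ0)) (hv : Tendsto (fun k => ((vk k : ℝ))) atTop (𝓝 (v0 : ℝ))) :
    Tendsto (fun k => ∫ z in A, gaussianPDFReal (μk k) (vk k) z) atTop
      (𝓝 (∫ z in A, gaussianPDFReal μ0 v0 z)) := by
  set K : ℝ := (Real.sqrt (π * v0))⁻¹ * Real.exp (1/(4*(v0:ℝ))) * Real.sqrt (2*π*((4*v0 : ℝ≥0):ℝ))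
  apply tendsto_integral_filter_of_dominated_convergence
    (fun z => K * gaussianPDFReal μ0 (4*v0) z)
  · exact Eventually.of_forall fun k =>
      ((integrable_gaussianPDFReal (μk k) (vk k)).restrict (s := A)).aestronglyMeasurable
  · have h1 : ∀ᶠ k in atTop, |μk k - μ0| ≤ 1 := by
      have := Metric.tendsto_atTop.mp hμ 1 one_pos
      obtain ⟨N, hN⟩ := this
      refine eventually_atTop.mpr ⟨N, fun k hk => ?_⟩
      have := hN k hk
      rw [Real.dist_eq] at this
      exact this.le
    have h2 : ∀ᶠ k in atTop, (v0:ℝ)/2 ≤ (vk k : ℝ) ∧ (vk k : ℝ) ≤ 2*(v0:ℝ) := by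
      have := Metric.tendsto_atTop.mp hv ((v0:ℝ)/2) (by linarith)
      obtain ⟨N, hN⟩ := this
      refine eventually_atTop.mpr ⟨N, fun k hk => ?_⟩
      have := hN k hk
      rw [Real.dist_eq] at this
      have := abs_lt.mp this
      constructor <;> linarith [this.1, this.2]
    filter_upwards [h1, h2] with k hk1 hk2
    refine Eventually.of_forall fun z => ?_
    rw [Real.norm_eq_abs, abs_of_nonneg (gaussianPDFReal_nonneg _ _ _)]
    exact pdf_bound μ0 hv0 (μk k) (vk k) hk1 hk2.1 hk2.2 z
  · exact ((integrable_gaussianPDFReal μ0 (4*v0)).const_mul K).restrict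
  · refine Eventually.of_forall fun z => ?_
    simp only [gaussianPDFReal]
    have harg : Tendsto (fun k => - (z - μk k)^2 / (2 * (vk k : ℝ))) atTop
        (𝓝 (- (z - μ0)^2 / (2 * (v0:ℝ)))) := by
      apply Tendsto.div
      · exact (((tendsto_const_nhds (x := z)).sub hμ).pow 2).neg
      · exact (tendsto_const_nhds (x := (2:ℝ))).mul hv
      · positivity
    have hsqrt : Tendsto (fun k => Real.sqrt (2 * π * (vk k : ℝ))) atTop
        (𝓝 (Real.sqrt (2 * π * (v0:ℝ)))) := by
      exact (Real.continuous_sqrt.tendsto _).comp ((tendsto_const_nhds (x := 2*π)).mul hv)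
    have hinv := hsqrt.inv₀ (ne_of_gt (Real.sqrt_pos.mpr (by positivity)))
    exact hinv.mul ((Real.continuous_exp.tendsto _).comp harg)

end JAaux

theorem JA_attained
    (A : Set ℝ)
    (hA : A ∈ MeasureTheory.generateSetAlgebra {s : Set ℝ | ∃ x, s = Set.Iic x})
    (hAne : A.Nonempty)
    (p : ℝ) (hp : 0 < p) (hp1 : p < 1)
    (J : ℝ)
    (hJ : J = sInf {y : ℝ | y ∈ Set.Icc (0:ℝ) 1 ∧
      p ≤ sSup (Set.range (fun x : ℝ =>
        ((gaussianReal 0 1)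
          ((fun z => (z - x) / Real.sqrt (1 - y)) '' A)).toReal))}) :
    0 ≤ J ∧ J < 1 ∧ ∃ (x r : ℝ), r ∈ Set.Ico (0:ℝ) 1 ∧ r = J ∧
      p ≤ ((gaussianReal 0 1)
        ((fun z => (z - x) / Real.sqrt (1 - r)) '' A)).toReal := by
  classical
  have hAn : JAaux.Nice A := JAaux.nice_of_mem hA
  have hAm : MeasurableSet A := JAaux.nice_measurable hAn
  set S : Set ℝ := {y : ℝ | y ∈ Set.Icc (0:ℝ) 1 ∧
      p ≤ sSup (Set.range (fun x : ℝ =>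
        ((gaussianReal 0 1)
          ((fun z => (z - x) / Real.sqrt (1 - y)) '' A)).toReal))} with hSdef
  have hb : ∀ s : Set ℝ, ((gaussianReal 0 1) s).toReal ≤ 1 := by
    intro s
    have h := prob_le_one (μ := gaussianReal 0 1) (s := s)
    simpa using ENNReal.toReal_mono ENNReal.one_ne_top h
  have hbdd : ∀ y : ℝ, BddAbove (Set.range (fun x : ℝ =>
      ((gaussianReal 0 1) ((fun z => (z - x) / Real.sqrt (1 - y)) '' A)).toReal)) :=
    fun y => ⟨1, by rintro _ ⟨x, rfl⟩; exact hb _⟩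
  have hmem : ∀ y : ℝ, 0 ≤ y → y ≤ 1 → ∀ x : ℝ,
      p ≤ ((gaussianReal 0 1) ((fun z => (z - x) / Real.sqrt (1 - y)) '' A)).toReal →
      y ∈ S := by
    intro y h0 h1 x hx
    rw [hSdef]
    exact ⟨⟨h0, h1⟩, hx.trans (le_csSup (hbdd y) (mem_range_self x))⟩
  have hnonneg : ∀ y ∈ S, 0 ≤ y := by
    intro y hy; rw [hSdef] at hy; exact hy.1.1
  have hbddS : BddBelow S := ⟨0, fun y hy => hnonneg y hy⟩
  rcases JAaux.nice_cases hAn hAne with ⟨a, haA⟩ | ⟨a, haA⟩ | ⟨lo, hi, a, b, hab, hIoo, hbd⟩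
  · -- A contains Iic a
    obtain ⟨n, hn⟩ := (JAaux.tendsto_Iic_one.eventually (eventually_ge_nhds hp1)).exists
    have h1 : Real.sqrt (1 - 0) = 1 := by norm_num
    set x : ℝ := a - n with hxdef
    have hx : p ≤ ((gaussianReal 0 1)
        ((fun z => (z - x) / Real.sqrt (1 - (0:ℝ))) '' A)).toReal := by
      refine hn.trans (JAaux.toReal_mono' ?_)
      have himg : (fun z => (z - x) / Real.sqrt (1 - (0:ℝ))) '' (Iic a)
          = Iic ((a - x) / Real.sqrt (1 - (0:ℝ))) :=
        JAaux.image_Iic (by rw [h1]; exact one_pos) a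
      have hax : (a - x) / Real.sqrt (1 - (0:ℝ)) = (n:ℝ) := by
        rw [h1, hxdef]; ring
      rw [← hax, ← himg]
      exact image_mono haA
    have h0S : (0:ℝ) ∈ S := hmem 0 le_rfl zero_le_one x hx
    have hJeq : J = 0 := by
      rw [hJ]
      exact le_antisymm (csInf_le hbddS h0S) (le_csInf ⟨0, h0S⟩ hnonneg)
    exact ⟨hJeq.ge, by rw [hJeq]; exact one_pos,
      x, 0, ⟨le_rfl, one_pos⟩, hJeq.symm, hx⟩
  · -- A contains Ioi a
    obtain ⟨n, hn⟩ := (JAaux.tendsto_Ioi_one.eventually (eventually_ge_nhds hp1)).exists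
    have h1 : Real.sqrt (1 - 0) = 1 := by norm_num
    set x : ℝ := a + n with hxdef
    have hx : p ≤ ((gaussianReal 0 1)
        ((fun z => (z - x) / Real.sqrt (1 - (0:ℝ))) '' A)).toReal := by
      refine hn.trans (JAaux.toReal_mono' ?_)
      have himg : (fun z => (z - x) / Real.sqrt (1 - (0:ℝ))) '' (Ioi a)
          = Ioi ((a - x) / Real.sqrt (1 - (0:ℝ))) :=
        JAaux.image_Ioi (by rw [h1]; exact one_pos) a
      have hax : (a - x) / Real.sqrt (1 - (0:ℝ)) = -(n:ℝ) := by
        rw [h1, hxdef]; ring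
      rw [← hax, ← himg]
      exact image_mono haA
    have h0S : (0:ℝ) ∈ S := hmem 0 le_rfl zero_le_one x hx
    have hJeq : J = 0 := by
      rw [hJ]
      exact le_antisymm (csInf_le hbddS h0S) (le_csInf ⟨0, h0S⟩ hnonneg)
    exact ⟨hJeq.ge, by rw [hJeq]; exact one_pos,
      x, 0, ⟨le_rfl, one_pos⟩, hJeq.symm, hx⟩
  · -- bounded case
    obtain ⟨n₀, hn₀p, hn₀1⟩ :=
      ((JAaux.tendsto_Ioo_one.eventually (eventually_ge_nhds hp1)).and
        (eventually_ge_atTop 1)).exists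
    have hn₀R : (1:ℝ) ≤ (n₀:ℝ) := by exact_mod_cast hn₀1
    set δ : ℝ := (b - a)/2 with hδdef
    have hδpos : 0 < δ := by rw [hδdef]; linarith
    set x₁ : ℝ := (a + b)/2 with hx₁def
    set s₀ : ℝ := min 1 (δ/(n₀:ℝ)) with hs₀def
    have hs₀pos : 0 < s₀ := lt_min one_pos (div_pos hδpos (by linarith))
    have hs₀le1 : s₀ ≤ 1 := min_le_left _ _
    set y₀ : ℝ := 1 - s₀^2 with hy₀def
    have hy₀0 : 0 ≤ y₀ := by rw [hy₀def]; nlinarith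
    have hy₀1 : y₀ < 1 := by rw [hy₀def]; nlinarith
    have hsqrt : Real.sqrt (1 - y₀) = s₀ := by
      rw [hy₀def, show (1:ℝ) - (1 - s₀^2) = s₀^2 from by ring]
      exact Real.sqrt_sq hs₀pos.le
    have hy₀g : p ≤ ((gaussianReal 0 1)
        ((fun z => (z - x₁) / Real.sqrt (1 - y₀)) '' A)).toReal := by
      refine hn₀p.trans (JAaux.toReal_mono' ?_)
      refine subset_trans ?_ (image_mono hIoo)
      have himg : (fun z => (z - x₁) / Real.sqrt (1 - y₀)) '' Ioo a b
          = Ioo ((a - x₁)/s₀) ((b - x₁)/s₀) := by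
        rw [hsqrt]; exact JAaux.image_Ioo hs₀pos a b
      rw [himg]
      have h1 : (a - x₁)/s₀ = -(δ/s₀) := by
        rw [hx₁def, hδdef]; ring
      have h2 : (b - x₁)/s₀ = δ/s₀ := by
        rw [hx₁def, hδdef]; ring
      have hn₀le : (n₀:ℝ) ≤ δ/s₀ := by
        rw [le_div_iff₀ hs₀pos]
        have hmin : s₀ ≤ δ/(n₀:ℝ) := min_le_right _ _
        calc (n₀:ℝ) * s₀ ≤ (n₀:ℝ) * (δ/(n₀:ℝ)) :=
              mul_le_mul_of_nonneg_left hmin (by linarith)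
          _ = δ := by field_simp
      rw [h1, h2]
      exact Ioo_subset_Ioo (neg_le_neg hn₀le) hn₀le
    have hy₀S : y₀ ∈ S := hmem y₀ hy₀0 hy₀1.le x₁ hy₀g
    have hSne : S.Nonempty := ⟨y₀, hy₀S⟩
    have hJ0 : 0 ≤ J := by rw [hJ]; exact le_csInf hSne hnonneg
    have hJ1 : J < 1 := lt_of_le_of_lt (by rw [hJ]; exact csInf_le hbddS hy₀S) hy₀1
    obtain ⟨n₁, hn₁⟩ := (JAaux.tendsto_Iic_zero.eventually
      (eventually_lt_nhds (by linarith : (0:ℝ) < p/2))).exists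
    obtain ⟨n₂, hn₂⟩ := (JAaux.tendsto_Ioi_zero.eventually
      (eventually_lt_nhds (by linarith : (0:ℝ) < p/2))).exists
    set T : ℝ := max (n₁:ℝ) (n₂:ℝ) with hTdef
    have hT0 : 0 ≤ T := le_trans (Nat.cast_nonneg n₁) (le_max_left _ _)
    have hTiic : ((gaussianReal 0 1) (Iic (-T))).toReal < p/2 :=
      lt_of_le_of_lt (JAaux.toReal_mono' (Iic_subset_Iic.2 (neg_le_neg (le_max_left _ _)))) hn₁
    have hTioi : ((gaussianReal 0 1) (Ioi T)).toReal < p/2 :=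
      lt_of_le_of_lt (JAaux.toReal_mono' (Ioi_subset_Ioi (le_max_right _ _))) hn₂
    have htail : ∀ y x : ℝ, 0 ≤ y → y < 1 →
        p/2 ≤ ((gaussianReal 0 1) ((fun z => (z - x) / Real.sqrt (1 - y)) '' A)).toReal →
        x ∈ Icc (lo - T) (hi + T) := by
      intro y x h0 h1 hg2
      have hspos : 0 < Real.sqrt (1 - y) := Real.sqrt_pos.mpr (by linarith)
      have hsle1 : Real.sqrt (1 - y) ≤ 1 := Real.sqrt_le_one.mpr (by linarith)
      constructor
      · by_contra hcon
        push_neg at hcon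
        have hsub2 : (fun z => (z - x) / Real.sqrt (1 - y)) '' A ⊆ Ioi T := by
          rintro w ⟨z, hz, rfl⟩
          have hzlo : lo ≤ z := (hbd hz).1
          have h1' : T < z - x := by linarith
          have h2' : z - x ≤ (z - x) / Real.sqrt (1 - y) := by
            rw [le_div_iff₀ hspos]; nlinarith
          exact lt_of_lt_of_le h1' h2'
        have := JAaux.toReal_mono' (μ := gaussianReal 0 1) hsub2
        linarith
      · by_contra hcon
        push_neg at hcon
        have hsub2 : (fun z => (z - x) / Real.sqrt (1 - y)) '' A ⊆ Iic (-T) := by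
          rintro w ⟨z, hz, rfl⟩
          have hzhi : z ≤ hi := (hbd hz).2
          have h1' : z - x ≤ -T := by linarith
          have h2' : (z - x) / Real.sqrt (1 - y) ≤ z - x := by
            rw [div_le_iff₀ hspos]; nlinarith
          exact le_trans h2' h1'
        have := JAaux.toReal_mono' (μ := gaussianReal 0 1) hsub2
        linarith
    have hseq : ∀ k : ℕ, ∃ y, y ∈ S ∧ y < J + min (1/((k:ℝ)+1)) (1 - J) := by
      intro k
      have hpos : 0 < min (1/((k:ℝ)+1)) (1 - J) := lt_min (by positivity) (by linarith)
      have hlt : sInf S < J + min (1/((k:ℝ)+1)) (1 - J) := by rw [← hJ]; linarith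
      obtain ⟨y, hyS, hylt⟩ := exists_lt_of_csInf_lt hSne hlt
      exact ⟨y, hyS, hylt⟩
    choose ys hysS hyslt using hseq
    have hysJ : ∀ k, J ≤ ys k := fun k => by rw [hJ]; exact csInf_le hbddS (hysS k)
    have hys1 : ∀ k, ys k < 1 := by
      intro k
      have h := min_le_right (1/((k:ℝ)+1)) (1 - J)
      linarith [hyslt k]
    have hys0 : ∀ k, 0 ≤ ys k := fun k => hnonneg _ (hysS k)
    have htendy : Tendsto ys atTop (𝓝 J) := by
      refine tendsto_of_tendsto_of_tendsto_of_le_of_le (g := fun _ : ℕ => J)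
        (h := fun k : ℕ => J + 1/((k:ℝ)+1)) tendsto_const_nhds ?_ hysJ ?_
      · have h1 := tendsto_one_div_add_atTop_nhds_zero_nat (𝕜 := ℝ)
        have h2 := (tendsto_const_nhds (x := J) (f := (atTop : Filter ℕ))).add h1
        simpa using h2
      · intro k
        have h := min_le_left (1/((k:ℝ)+1)) (1 - J)
        linarith [hyslt k]
    have hxseq : ∀ k : ℕ, ∃ x : ℝ, p - min (1/((k:ℝ)+1)) (p/2) <
        ((gaussianReal 0 1) ((fun z => (z - x) / Real.sqrt (1 - ys k)) '' A)).toReal := by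
      intro k
      have hminpos : 0 < min (1/((k:ℝ)+1)) (p/2) := lt_min (by positivity) (by linarith)
      have hpS : p ≤ sSup (Set.range (fun x : ℝ =>
          ((gaussianReal 0 1) ((fun z => (z - x) / Real.sqrt (1 - ys k)) '' A)).toReal)) := by
        have h := hysS k
        rw [hSdef] at h
        exact h.2
      have hlt : p - min (1/((k:ℝ)+1)) (p/2) < sSup (Set.range (fun x : ℝ =>
          ((gaussianReal 0 1) ((fun z => (z - x) / Real.sqrt (1 - ys k)) '' A)).toReal)) :=
        lt_of_lt_of_le (by linarith) hpS
      obtain ⟨_, ⟨x, rfl⟩, hx⟩ := exists_lt_of_lt_csSup ⟨_, mem_range_self 0⟩ hlt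
      exact ⟨x, hx⟩
    choose xs hxs using hxseq
    have hxbound : ∀ k, xs k ∈ Icc (lo - T) (hi + T) := by
      intro k
      refine htail (ys k) (xs k) (hys0 k) (hys1 k) ?_
      have hmin : min (1/((k:ℝ)+1)) (p/2) ≤ p/2 := min_le_right _ _
      linarith [hxs k]
    obtain ⟨x₀, hx₀mem, φ, hφmono, hφtend⟩ :=
      (isCompact_Icc (a := lo - T) (b := hi + T)).tendsto_subseq hxbound
    have hvJpos : (0:ℝ) < 1 - J := by linarith
    have hvJcoe : (((1 - J).toNNReal : ℝ≥0) : ℝ) = 1 - J := Real.coe_toNNReal _ hvJpos.le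
    have htendyφ : Tendsto (fun j => ys (φ j)) atTop (𝓝 J) :=
      htendy.comp hφmono.tendsto_atTop
    have hvtend : Tendsto (fun j => (((1 - ys (φ j)).toNNReal : ℝ≥0) : ℝ)) atTop
        (𝓝 (((1 - J).toNNReal : ℝ≥0) : ℝ)) := by
      rw [hvJcoe]
      have hbase : Tendsto (fun j => 1 - ys (φ j)) atTop (𝓝 (1 - J)) :=
        tendsto_const_nhds.sub htendyφ
      refine (Filter.Tendsto.congr (fun j => ?_) hbase)
      exact (Real.coe_toNNReal _ (by linarith [hys1 (φ j)] : (0:ℝ) ≤ 1 - ys (φ j))).symm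
    have hint := JAaux.tendsto_integral_gauss A (fun j => xs (φ j))
      (fun j => (1 - ys (φ j)).toNNReal) x₀ ((1 - J).toNNReal)
      (by rw [hvJcoe]; exact hvJpos) hφtend hvtend
    have hglim : Tendsto (fun j =>
        ((gaussianReal 0 1) ((fun z => (z - xs (φ j)) / Real.sqrt (1 - ys (φ j))) '' A)).toReal)
        atTop (𝓝 (∫ z in A, gaussianPDFReal x₀ ((1 - J).toNNReal) z)) := by
      refine Filter.Tendsto.congr (fun j => ?_) hint
      exact (JAaux.g_eq hAm (hys1 (φ j)) (xs (φ j))).symm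
    have hlow : Tendsto (fun j => p - 1/((φ j : ℝ)+1)) atTop (𝓝 p) := by
      have h1 : Tendsto (fun k : ℕ => 1/((k:ℝ)+1)) atTop (𝓝 0) :=
        tendsto_one_div_add_atTop_nhds_zero_nat
      have h2 := (tendsto_const_nhds (x := p) (f := (atTop : Filter ℕ))).sub
        (h1.comp hφmono.tendsto_atTop)
      simpa using h2
    have hfin : p ≤ ∫ z in A, gaussianPDFReal x₀ ((1 - J).toNNReal) z := by
      refine le_of_tendsto_of_tendsto' hlow hglim fun j => ?_
      have h1 := hxs (φ j)
      have h2 : min (1/((φ j : ℝ)+1)) (p/2) ≤ 1/((φ j : ℝ)+1) := min_le_left _ _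
      linarith
    refine ⟨hJ0, hJ1, x₀, J, ⟨hJ0, hJ1⟩, rfl, ?_⟩
    rw [JAaux.g_eq hAm hJ1 x₀]
    exact hfin
end

section
/- Let ν be the standard Gaussian measure on ℝ and A a nonempty finite union of intervals with ν(A) > 0. If p > ν(A), then either 0 < I_A(p) < ∞, or I_A(p) = ∞ and J_A(p) ∈ (0,1), where I_A(p) = inf{|x| : ν(A-x) ≥ p} and J_A(p) = inf{y ∈ [0,1] : sup_x ν((A-x)/√(1-y)) ≥ p}. -/
open MeasureTheory ProbabilityTheory Set Filter Topology Real NNReal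


namespace IAJA

lemma meas_of_mem {A : Set ℝ}
    (hA : A ∈ MeasureTheory.generateSetAlgebra {s : Set ℝ | ∃ x, s = Set.Iic x}) :
    MeasurableSet A := by
  induction hA with
  | base s hs => obtain ⟨x, rfl⟩ := hs; exact measurableSet_Iic
  | empty => exact MeasurableSet.empty
  | compl s _ ih => exact ih.compl
  | union s t _ _ ihs iht => exact ihs.union iht

lemma frontier_finite {A : Set ℝ}
    (hA : A ∈ MeasureTheory.generateSetAlgebra {s : Set ℝ | ∃ x, s = Set.Iic x}) :
    (frontier A).Finite := by
  induction hA with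
  | base s hs => obtain ⟨x, rfl⟩ := hs; rw [frontier_Iic]; exact finite_singleton x
  | empty => simp
  | compl s _ ih => rwa [frontier_compl]
  | union s t _ _ ihs iht => exact (ihs.union iht).subset ((frontier_union_subset s t).trans (union_subset_union inter_subset_left inter_subset_right))

lemma eventually_const {A : Set ℝ}
    (hA : A ∈ MeasureTheory.generateSetAlgebra {s : Set ℝ | ∃ x, s = Set.Iic x}) :
    ((∀ᶠ x in atTop, x ∈ A) ∨ (∀ᶠ x in atTop, x ∉ A)) ∧
    ((∀ᶠ x in atBot, x ∈ A) ∨ (∀ᶠ x in atBot, x ∉ A)) := by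
  induction hA with
  | base s hs =>
      obtain ⟨x, rfl⟩ := hs
      constructor
      · right; filter_upwards [eventually_gt_atTop x] with y hy
        simpa using not_le.2 hy
      · left; filter_upwards [eventually_le_atBot x] with y hy using hy
  | empty => exact ⟨Or.inr (by simp), Or.inr (by simp)⟩
  | compl s _ ih =>
      obtain ⟨h1, h2⟩ := ih
      exact ⟨h1.symm.imp (fun h => h.mono fun x hx => by simpa using hx)
          (fun h => h.mono fun x hx => by simpa using hx),
        h2.symm.imp (fun h => h.mono fun x hx => by simpa using hx)
          (fun h => h.mono fun x hx => by simpa using hx)⟩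
  | union s t _ _ ihs iht =>
      obtain ⟨hs1, hs2⟩ := ihs
      obtain ⟨ht1, ht2⟩ := iht
      constructor
      · rcases hs1 with h | h
        · exact Or.inl (h.mono fun x hx => Or.inl hx)
        · rcases ht1 with h' | h'
          · exact Or.inl (h'.mono fun x hx => Or.inr hx)
          · right; filter_upwards [h, h'] with x hx hx'
            rintro (hh | hh) <;> [exact hx hh; exact hx' hh]
      · rcases hs2 with h | h
        · exact Or.inl (h.mono fun x hx => Or.inl hx)
        · rcases ht2 with h' | h'
          · exact Or.inl (h'.mono fun x hx => Or.inr hx)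
          · right; filter_upwards [h, h'] with x hx hx'
            rintro (hh | hh) <;> [exact hx hh; exact hx' hh]

lemma image_sub (A : Set ℝ) (x : ℝ) :
    (fun y => y - x) '' A = (fun y => y + x) ⁻¹' A := by
  ext z
  constructor
  · rintro ⟨a, ha, rfl⟩; simpa [sub_add_cancel] using ha
  · intro hz; exact ⟨z + x, hz, add_sub_cancel_right z x⟩

lemma image_affine (A : Set ℝ) (x : ℝ) {s : ℝ} (hs : s ≠ 0) :
    (fun z => (z - x) / s) '' A = (fun w => s * w + x) ⁻¹' A := by
  ext w
  constructor
  · rintro ⟨a, ha, rfl⟩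
    have : s * ((a - x) / s) + x = a := by field_simp; ring
    simpa [this] using ha
  · intro hw
    exact ⟨s * w + x, hw, by field_simp; ring⟩

lemma measure_image_sub {A : Set ℝ} (hAm : MeasurableSet A) (x : ℝ) :
    gaussianReal 0 1 ((fun y => y - x) '' A) = gaussianReal x 1 A := by
  rw [image_sub]
  have := gaussianReal_map_add_const (μ := 0) (v := 1) x
  rw [zero_add] at this
  rw [← this, Measure.map_apply (measurable_add_const x) hAm]

lemma measure_image_affine {A : Set ℝ} (hAm : MeasurableSet A) (x : ℝ) {s : ℝ} (hs : 0 < s) :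
    gaussianReal 0 1 ((fun z => (z - x) / s) '' A)
      = gaussianReal x ⟨s ^ 2, sq_nonneg s⟩ A := by
  rw [image_affine A x hs.ne']
  have h1 : (fun w : ℝ => s * w + x) = ((· + x) ∘ (s * ·)) := rfl
  have hmap : (gaussianReal 0 1).map (fun w => s * w + x)
      = gaussianReal x ⟨s ^ 2, sq_nonneg s⟩ := by
    rw [h1, ← Measure.map_map (measurable_add_const x) (measurable_const_mul s)]
    rw [gaussianReal_map_const_mul (μ := 0) (v := 1) s, mul_zero, mul_one,
      gaussianReal_map_add_const, zero_add]
    rfl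
  rw [← hmap, Measure.map_apply (by fun_prop) hAm]

lemma toReal_eq {A : Set ℝ} (m : ℝ) {v : NNReal} (hv : v ≠ 0) :
    (gaussianReal m v A).toReal = ∫ t in A, gaussianPDFReal m v t := by
  rw [gaussianReal_apply_eq_integral m hv A,
    ENNReal.toReal_ofReal (integral_nonneg fun t => gaussianPDFReal_nonneg _ _ _)]

end IAJA


namespace IAJA2

lemma pdf_eq (m t : ℝ) : gaussianPDFReal m 1 t
    = (Real.sqrt (2 * π))⁻¹ * Real.exp (-(t - m) ^ 2 / 2) := by
  simp [gaussianPDFReal]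

lemma pdf_eq' (s u : ℝ) : gaussianPDFReal 0 ⟨s ^ 2, sq_nonneg s⟩ u
    = (Real.sqrt (2 * π * s ^ 2))⁻¹ * Real.exp (-u ^ 2 / (2 * s ^ 2)) := by
  simp [gaussianPDFReal]
  rfl

noncomputable def fA (A : Set ℝ) (m : ℝ) : ℝ := ∫ t in A, gaussianPDFReal m 1 t

lemma integrable_exp_quarter (m₀ : ℝ) :
    Integrable (fun t : ℝ => Real.exp (-(t - m₀) ^ 2 / 4)) := by
  have h := (integrable_exp_neg_mul_sq (show (0:ℝ) < 1/4 by norm_num)).comp_sub_right m₀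
  exact h.congr (ae_of_all _ fun t => by simp only []; congr 1; ring)

lemma integrable_exp_eighth :
    Integrable (fun u : ℝ => Real.exp (-u ^ 2 / 8)) := by
  have h := integrable_exp_neg_mul_sq (show (0:ℝ) < 1/8 by norm_num)
  exact h.congr (ae_of_all _ fun t => by simp only []; congr 1; ring)

lemma fA_cont (A : Set ℝ) : Continuous (fA A) := by
  rw [continuous_iff_continuousAt]
  intro m₀
  have : ContinuousAt (fun m => ∫ t, gaussianPDFReal m 1 t ∂(volume.restrict A)) m₀ := by
    apply continuousAt_of_dominated
      (bound := fun t => (Real.sqrt (2 * π))⁻¹ * Real.exp ((1:ℝ)/2) * Real.exp (-(t - m₀) ^ 2 / 4))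
    · exact Eventually.of_forall fun m =>
        (measurable_gaussianPDFReal m 1).aestronglyMeasurable.restrict
    · filter_upwards [Metric.closedBall_mem_nhds m₀ one_pos] with m hm
      apply ae_of_all
      intro t
      rw [Real.norm_eq_abs, abs_of_nonneg (gaussianPDFReal_nonneg _ _ _), pdf_eq]
      rw [mul_assoc, ← Real.exp_add]
      apply mul_le_mul_of_nonneg_left _ (by positivity)
      apply Real.exp_le_exp.2
      have hm' : |m - m₀| ≤ 1 := by
        simpa [Real.dist_eq] using Metric.mem_closedBall.1 hm
      have h1 : (m - m₀) ^ 2 ≤ 1 := by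
        nlinarith [abs_nonneg (m - m₀), sq_abs (m - m₀)]
      nlinarith [h1, sq_nonneg ((t - m) - (m - m₀))]
    · exact (((integrable_exp_quarter m₀).const_mul _)).restrict
    · apply ae_of_all
      intro t
      have : (fun m => gaussianPDFReal m 1 t)
          = fun m => (Real.sqrt (2 * π))⁻¹ * Real.exp (-(t - m) ^ 2 / 2) := by
        funext m; exact pdf_eq m t
      rw [this]
      fun_prop
  exact this

lemma exp_decay_tendsto (a : ℝ) (c : ℝ) :
    Tendsto (fun m => c * Real.exp (-(m - a) ^ 2 / 2)) atTop (𝓝 0) := by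
  have h1 : Tendsto (fun m : ℝ => m - a) atTop atTop :=
    tendsto_atTop_add_const_right _ (-a) tendsto_id
  have h2 : Tendsto (fun m : ℝ => (m - a) ^ 2) atTop atTop := by
    simpa [pow_two] using h1.atTop_mul_atTop₀ h1
  have h3 : Tendsto (fun m : ℝ => -(m - a) ^ 2 / 2) atTop atBot := by
    apply Tendsto.atBot_div_const (by norm_num)
    exact tendsto_neg_atBot_iff.2 h2
  have h4 := Real.tendsto_exp_atBot.comp h3
  simpa using (h4.const_mul c)

lemma fA_le_of_bound {A : Set ℝ} {b a : ℝ} (hba : b ≤ a) (hsub : A ⊆ Icc b a)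
    {m C : ℝ} (hC : 0 ≤ C) (h : ∀ t ∈ Icc b a, Real.exp (-(t - m) ^ 2 / 2) ≤ C) :
    fA A m ≤ (Real.sqrt (2 * π))⁻¹ * C * (a - b) := by
  have hvol : volume A < ⊤ :=
    lt_of_le_of_lt (measure_mono hsub) measure_Icc_lt_top
  have hnorm := norm_setIntegral_le_of_norm_le_const (μ := volume) (s := A)
    (C := (Real.sqrt (2 * π))⁻¹ * C) hvol
    (fun t ht => by
      rw [Real.norm_eq_abs, abs_of_nonneg (gaussianPDFReal_nonneg _ _ _), pdf_eq]
      exact mul_le_mul_of_nonneg_left (h t (hsub ht)) (by positivity))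
  have hA_toReal : (volume A).toReal ≤ a - b := by
    have h1 : (volume A) ≤ volume (Icc b a) := measure_mono hsub
    have h2 : (volume (Icc b a)).toReal = a - b := by
      rw [Real.volume_Icc, ENNReal.toReal_ofReal (by linarith)]
    calc (volume A).toReal ≤ (volume (Icc b a)).toReal :=
          ENNReal.toReal_mono measure_Icc_lt_top.ne h1
      _ = a - b := h2
  calc fA A m ≤ ‖∫ t in A, gaussianPDFReal m 1 t‖ := le_abs_self _
    _ ≤ (Real.sqrt (2 * π))⁻¹ * C * (volume A).toReal := hnorm
    _ ≤ (Real.sqrt (2 * π))⁻¹ * C * (a - b) := by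
        apply mul_le_mul_of_nonneg_left hA_toReal (by positivity)

lemma fA_tendsto_atTop {A : Set ℝ} {b a : ℝ} (hba : b ≤ a) (hsub : A ⊆ Icc b a) :
    Tendsto (fA A) atTop (𝓝 0) := by
  apply squeeze_zero' (g := fun m => (Real.sqrt (2 * π))⁻¹ * (a - b) * Real.exp (-(m - a) ^ 2 / 2))
  · exact Eventually.of_forall fun m =>
      integral_nonneg fun t => gaussianPDFReal_nonneg _ _ _
  · filter_upwards [eventually_ge_atTop a] with m hm
    have := fA_le_of_bound hba hsub (m := m) (C := Real.exp (-(m - a) ^ 2 / 2))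
      (Real.exp_nonneg _) (fun t ht => by
        apply Real.exp_le_exp.2
        have h1 : t ≤ a := ht.2
        nlinarith)
    calc fA A m ≤ (Real.sqrt (2 * π))⁻¹ * Real.exp (-(m - a) ^ 2 / 2) * (a - b) := this
      _ = (Real.sqrt (2 * π))⁻¹ * (a - b) * Real.exp (-(m - a) ^ 2 / 2) := by ring
  · exact exp_decay_tendsto a _

lemma fA_tendsto_atBot {A : Set ℝ} {b a : ℝ} (hba : b ≤ a) (hsub : A ⊆ Icc b a) :
    Tendsto (fA A) atBot (𝓝 0) := by
  have key : Tendsto (fun m => fA A (-m)) atTop (𝓝 0) := by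
    apply squeeze_zero' (g := fun m => (Real.sqrt (2 * π))⁻¹ * (a - b) * Real.exp (-(m + b) ^ 2 / 2))
    · exact Eventually.of_forall fun m =>
        integral_nonneg fun t => gaussianPDFReal_nonneg _ _ _
    · filter_upwards [eventually_ge_atTop (-b)] with m hm
      have := fA_le_of_bound hba hsub (m := -m) (C := Real.exp (-(m + b) ^ 2 / 2))
        (Real.exp_nonneg _) (fun t ht => by
          apply Real.exp_le_exp.2
          have h1 : b ≤ t := ht.1
          nlinarith)
      calc fA A (-m) ≤ (Real.sqrt (2 * π))⁻¹ * Real.exp (-(m + b) ^ 2 / 2) * (a - b) := this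
        _ = (Real.sqrt (2 * π))⁻¹ * (a - b) * Real.exp (-(m + b) ^ 2 / 2) := by ring
    · have := exp_decay_tendsto (-b) ((Real.sqrt (2 * π))⁻¹ * (a - b))
      simpa [sub_neg_eq_add, sub_eq_add_neg] using this
  have : Tendsto (fun m : ℝ => -m) atBot atTop := tendsto_neg_atBot_atTop
  have h2 := key.comp this
  simpa [Function.comp_def, neg_neg] using h2

end IAJA2


namespace IAJA3

lemma pdf_eq' (s u : ℝ) : gaussianPDFReal 0 ⟨s ^ 2, sq_nonneg s⟩ u
    = (Real.sqrt (2 * π * s ^ 2))⁻¹ * Real.exp (-u ^ 2 / (2 * s ^ 2)) := by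
  simp [gaussianPDFReal]
  rfl

noncomputable def Hd (s : ℝ) : ℝ :=
  ∫ u, |gaussianPDFReal 0 ⟨s ^ 2, sq_nonneg s⟩ u - gaussianPDFReal 0 1 u|

lemma one_sq_eq : (⟨(1:ℝ) ^ 2, sq_nonneg 1⟩ : ℝ≥0) = 1 := by
  ext; norm_num

lemma Hd_one : Hd 1 = 0 := by
  unfold Hd
  rw [show (⟨(1:ℝ) ^ 2, sq_nonneg 1⟩ : ℝ≥0) = 1 from one_sq_eq]
  exact (by simp : ∫ u, |gaussianPDFReal 0 1 u - gaussianPDFReal 0 1 u| = 0)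

lemma integrable_pdf_sub_abs (s : ℝ) :
    Integrable (fun u => |gaussianPDFReal 0 ⟨s ^ 2, sq_nonneg s⟩ u - gaussianPDFReal 0 1 u|) := by
  exact ((integrable_gaussianPDFReal 0 _).sub (integrable_gaussianPDFReal 0 1)).abs

lemma Hd_contAt : ContinuousAt Hd 1 := by
  apply continuousAt_of_dominated
    (bound := fun u => 2 * ((Real.sqrt (π / 2))⁻¹ * Real.exp (-u ^ 2 / 8)))
  · exact Eventually.of_forall fun s =>
      (((measurable_gaussianPDFReal 0 _).sub (measurable_gaussianPDFReal 0 1)).abs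
        ).aestronglyMeasurable
  · filter_upwards [Metric.closedBall_mem_nhds (1:ℝ) (by norm_num : (0:ℝ) < 1/2)] with s hs
    apply ae_of_all
    intro u
    have hs' : |s - 1| ≤ 1/2 := by simpa [Real.dist_eq] using Metric.mem_closedBall.1 hs
    have hs1 : 1/2 ≤ s := by cases abs_le.1 hs' with | intro h1 h2 => linarith
    have hs2 : s ≤ 3/2 := by cases abs_le.1 hs' with | intro h1 h2 => linarith
    have hsq1 : 1/4 ≤ s ^ 2 := by nlinarith
    have hsq2 : s ^ 2 ≤ 4 := by nlinarith
    have key : ∀ v : ℝ, 1/4 ≤ v → v ≤ 4 →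
        (Real.sqrt (2 * π * v))⁻¹ * Real.exp (-u ^ 2 / (2 * v))
          ≤ (Real.sqrt (π / 2))⁻¹ * Real.exp (-u ^ 2 / 8) := by
      intro v hv1 hv2
      have hv0 : 0 < v := by linarith
      apply mul_le_mul
      · apply inv_anti₀ (Real.sqrt_pos.2 (by positivity))
        apply Real.sqrt_le_sqrt
        nlinarith [Real.pi_pos]
      · apply Real.exp_le_exp.2
        rw [neg_div, neg_div, neg_le_neg_iff]
        apply div_le_div_of_nonneg_left (sq_nonneg u) (by linarith)
        linarith
      · positivity
      · positivity
    rw [Real.norm_eq_abs, abs_abs]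
    have h1 := key (s ^ 2) hsq1 hsq2
    have h2 := key 1 (by norm_num) (by norm_num)
    have e1 : gaussianPDFReal 0 ⟨s ^ 2, sq_nonneg s⟩ u
        = (Real.sqrt (2 * π * s ^ 2))⁻¹ * Real.exp (-u ^ 2 / (2 * s ^ 2)) := pdf_eq' s u
    have e2 : gaussianPDFReal 0 1 u
        = (Real.sqrt (2 * π * 1))⁻¹ * Real.exp (-u ^ 2 / (2 * 1)) := by
      simp [gaussianPDFReal]
    have hb1 : gaussianPDFReal 0 ⟨s ^ 2, sq_nonneg s⟩ u
        ≤ (Real.sqrt (π / 2))⁻¹ * Real.exp (-u ^ 2 / 8) := by rw [e1]; exact h1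
    have hb2 : gaussianPDFReal 0 1 u
        ≤ (Real.sqrt (π / 2))⁻¹ * Real.exp (-u ^ 2 / 8) := by rw [e2]; exact h2
    have hn1 := gaussianPDFReal_nonneg 0 (⟨s ^ 2, sq_nonneg s⟩ : ℝ≥0) u
    have hn2 := gaussianPDFReal_nonneg 0 1 u
    rw [abs_sub_le_iff]
    constructor <;> nlinarith
  · apply Integrable.const_mul
    apply Integrable.const_mul
    have h := integrable_exp_neg_mul_sq (show (0:ℝ) < 1/8 by norm_num)
    exact h.congr (ae_of_all _ fun t => by simp only []; congr 1; ring)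
  · apply ae_of_all
    intro u
    have heq : ∀ s : ℝ, |gaussianPDFReal 0 ⟨s ^ 2, sq_nonneg s⟩ u - gaussianPDFReal 0 1 u|
        = |(Real.sqrt (2 * π * s ^ 2))⁻¹ * Real.exp (-u ^ 2 / (2 * s ^ 2))
            - gaussianPDFReal 0 1 u| := fun s => by rw [pdf_eq']
    simp only [heq]
    apply ContinuousAt.abs
    apply ContinuousAt.sub _ continuousAt_const
    apply ContinuousAt.mul
    · apply ContinuousAt.inv₀
      · apply Continuous.continuousAt; fun_prop
      · rw [one_pow]; exact (Real.sqrt_pos.2 (by positivity)).ne'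
    · apply ContinuousAt.comp Real.continuous_exp.continuousAt
      apply ContinuousAt.div continuousAt_const (by fun_prop)
      norm_num

lemma integrable_bound_mul : True := trivial

lemma dil_bound {A : Set ℝ} (x : ℝ) (s : ℝ) :
    ∫ t in A, gaussianPDFReal x ⟨s ^ 2, sq_nonneg s⟩ t
      ≤ (∫ t in A, gaussianPDFReal x 1 t) + Hd s := by
  set v : ℝ≥0 := ⟨s ^ 2, sq_nonneg s⟩ with hv
  have hi1 : Integrable (fun t => gaussianPDFReal x v t) (volume.restrict A) :=
    (integrable_gaussianPDFReal x v).restrict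
  have hi2 : Integrable (fun t => gaussianPDFReal x 1 t) (volume.restrict A) :=
    (integrable_gaussianPDFReal x 1).restrict
  have habs : Integrable (fun t => |gaussianPDFReal x v t - gaussianPDFReal x 1 t|) :=
    ((integrable_gaussianPDFReal x v).sub (integrable_gaussianPDFReal x 1)).abs
  have key : (∫ t in A, gaussianPDFReal x v t) - ∫ t in A, gaussianPDFReal x 1 t ≤ Hd s := by
    rw [← integral_sub hi1 hi2]
    calc ∫ t in A, (gaussianPDFReal x v t - gaussianPDFReal x 1 t)
        ≤ ∫ t in A, |gaussianPDFReal x v t - gaussianPDFReal x 1 t| :=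
          integral_mono (hi1.sub hi2) habs.restrict (fun t => le_abs_self _)
      _ ≤ ∫ t, |gaussianPDFReal x v t - gaussianPDFReal x 1 t| :=
          setIntegral_le_integral habs (ae_of_all _ fun t => abs_nonneg _)
      _ = Hd s := by
          unfold Hd
          rw [← integral_sub_right_eq_self
            (fun u => |gaussianPDFReal 0 v u - gaussianPDFReal 0 1 u|) x]
          congr 1
          funext t
          rw [gaussianPDFReal_sub, gaussianPDFReal_sub, zero_add]
  linarith

lemma exists_K (p : ℝ) (hp1 : p < 1) (c : ℝ) :
    ∃ K : ℝ, c ≤ K ∧ 0 < K ∧ p ≤ ((gaussianReal 0 1) (Ioo (-K) K)).toReal := by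
  have hmono : Monotone (fun n : ℕ => Ioo (-(n:ℝ)) (n:ℝ)) := fun i j hij =>
    Ioo_subset_Ioo (by simp; exact_mod_cast hij) (by exact_mod_cast hij)
  have hun : (⋃ n : ℕ, Ioo (-(n:ℝ)) (n:ℝ)) = univ := by
    rw [eq_univ_iff_forall]
    intro x
    obtain ⟨n, hn⟩ := exists_nat_gt |x|
    exact mem_iUnion.2 ⟨n, by cases abs_lt.1 hn with | intro h1 h2 => exact ⟨by linarith, h2⟩⟩
  have htend := tendsto_measure_iUnion_atTop (μ := gaussianReal 0 1) hmono
  rw [hun, measure_univ] at htend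
  have htoReal : Tendsto (fun n : ℕ => ((gaussianReal 0 1) (Ioo (-(n:ℝ)) (n:ℝ))).toReal)
      atTop (𝓝 1) := by
    have h := (ENNReal.tendsto_toReal ENNReal.one_ne_top).comp htend
    exact h
  have hev := (htoReal.eventually_const_lt hp1).and
    (eventually_ge_atTop (max 1 ⌈c⌉₊))
  obtain ⟨n, hn1, hn2⟩ := hev.exists
  refine ⟨n, ?_, ?_, hn1.le⟩
  · calc c ≤ (⌈c⌉₊ : ℝ) := Nat.le_ceil c
      _ ≤ n := by exact_mod_cast le_of_max_le_right hn2
  · have : (1:ℕ) ≤ n := le_of_max_le_left hn2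
    exact_mod_cast Nat.lt_of_lt_of_le Nat.zero_lt_one this

end IAJA3


open MeasureTheory ProbabilityTheory Set

set_option maxHeartbeats 2000000 in
theorem IA_or_JA
    (A : Set ℝ)
    (hA : A ∈ MeasureTheory.generateSetAlgebra {s : Set ℝ | ∃ x, s = Set.Iic x})
    (hAne : A.Nonempty)
    (hν : 0 < ((gaussianReal 0 1) A).toReal)
    (p : ℝ) (hp : ((gaussianReal 0 1) A).toReal < p) (hp1 : p < 1) :
    ({x : ℝ | p ≤ ((gaussianReal 0 1) ((fun y => y - x) '' A)).toReal}.Nonempty ∧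
      0 < sInf ((fun x => |x|) ''
        {x : ℝ | p ≤ ((gaussianReal 0 1) ((fun y => y - x) '' A)).toReal})) ∨
    ({x : ℝ | p ≤ ((gaussianReal 0 1) ((fun y => y - x) '' A)).toReal} = ∅ ∧
      sInf {y : ℝ | y ∈ Set.Icc (0:ℝ) 1 ∧
        p ≤ sSup (Set.range (fun x : ℝ =>
          ((gaussianReal 0 1)
            ((fun z => (z - x) / Real.sqrt (1 - y)) '' A)).toReal))}
        ∈ Set.Ioo (0:ℝ) 1) := by
  classical
  have hAm : MeasurableSet A := IAJA.meas_of_mem hA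
  have hval : ∀ x : ℝ, ((gaussianReal 0 1) ((fun y => y - x) '' A)).toReal = IAJA2.fA A x := by
    intro x
    rw [IAJA.measure_image_sub hAm x, IAJA.toReal_eq x one_ne_zero]
    rfl
  have hSet : {x : ℝ | p ≤ ((gaussianReal 0 1) ((fun y => y - x) '' A)).toReal}
      = {x : ℝ | p ≤ IAJA2.fA A x} := by
    ext x; rw [mem_setOf_eq, mem_setOf_eq, hval x]
  have himg0 : (fun y : ℝ => y - 0) '' A = A := by simp
  have hf0 : IAJA2.fA A 0 = ((gaussianReal 0 1) A).toReal := by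
    rw [← hval 0, himg0]
  have hf0lt : IAJA2.fA A 0 < p := by rw [hf0]; exact hp
  have hf0pos : 0 < IAJA2.fA A 0 := by rw [hf0]; exact hν
  have hcont := IAJA2.fA_cont A
  have htoReal_le_one : ∀ s : Set ℝ, ((gaussianReal 0 1) s).toReal ≤ 1 := by
    intro s
    calc ((gaussianReal 0 1) s).toReal ≤ (1 : ENNReal).toReal :=
        ENNReal.toReal_mono ENNReal.one_ne_top prob_le_one
      _ = 1 := by simp
  rcases Set.eq_empty_or_nonempty
      {x : ℝ | p ≤ ((gaussianReal 0 1) ((fun y => y - x) '' A)).toReal} with hS | hS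
  · -- S empty case
    right
    refine ⟨hS, ?_⟩
    have hlt : ∀ x, IAJA2.fA A x < p := by
      intro x
      by_contra h
      push_neg at h
      have : x ∈ {x : ℝ | p ≤ ((gaussianReal 0 1) ((fun y => y - x) '' A)).toReal} := by
        rw [hSet]; exact h
      rw [hS] at this
      exact this
    -- A is bounded
    obtain ⟨h1, h2⟩ := IAJA.eventually_const hA
    have hnotTop : ¬ ∀ᶠ x in atTop, x ∈ A := by
      intro h
      rw [eventually_atTop] at h
      obtain ⟨a, ha⟩ := h
      obtain ⟨K, -, hK0, hKp⟩ := IAJA3.exists_K p hp1 0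
      have hsub : Ioo (-K) K ⊆ (fun y => y + (a + K)) ⁻¹' A := by
        intro t ht
        exact ha _ (by rw [mem_Ioo] at ht; simp only [mem_preimage]; linarith [ht.1])
      have hcontr : p ≤ IAJA2.fA A (a + K) := by
        rw [← hval (a + K), IAJA.image_sub]
        exact hKp.trans (ENNReal.toReal_mono (measure_ne_top _ _) (measure_mono hsub))
      exact absurd hcontr (not_le.2 (hlt _))
    have hnotBot : ¬ ∀ᶠ x in atBot, x ∈ A := by
      intro h
      rw [eventually_atBot] at h
      obtain ⟨a, ha⟩ := h
      obtain ⟨K, -, hK0, hKp⟩ := IAJA3.exists_K p hp1 0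
      have hsub : Ioo (-K) K ⊆ (fun y => y + (a - K)) ⁻¹' A := by
        intro t ht
        exact ha _ (by rw [mem_Ioo] at ht; simp only [mem_preimage]; linarith [ht.2])
      have hcontr : p ≤ IAJA2.fA A (a - K) := by
        rw [← hval (a - K), IAJA.image_sub]
        exact hKp.trans (ENNReal.toReal_mono (measure_ne_top _ _) (measure_mono hsub))
      exact absurd hcontr (not_le.2 (hlt _))
    obtain ⟨a₀, ha₀⟩ := eventually_atTop.1 (h1.resolve_left hnotTop)
    obtain ⟨b₀, hb₀⟩ := eventually_atBot.1 (h2.resolve_left hnotBot)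
    have hsub : A ⊆ Icc b₀ a₀ := by
      intro x hx
      constructor
      · by_contra hc; push_neg at hc; exact hb₀ x hc.le hx
      · by_contra hc; push_neg at hc; exact ha₀ x hc.le hx
    obtain ⟨z₁, hz₁⟩ := hAne
    have hba : b₀ ≤ a₀ := le_trans (hsub hz₁).1 (hsub hz₁).2
    -- sup of fA is < p
    have htt := IAJA2.fA_tendsto_atTop hba hsub
    have htb := IAJA2.fA_tendsto_atBot hba hsub
    obtain ⟨a₁, ha₁⟩ := eventually_atTop.1 (htt.eventually_lt_const hf0pos)
    obtain ⟨b₁, hb₁⟩ := eventually_atBot.1 (htb.eventually_lt_const hf0pos)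
    set aa := max a₁ 0 with haa
    set bb := min b₁ 0 with hbb
    obtain ⟨x₀, hx₀mem, hx₀max⟩ := (isCompact_Icc (a := bb) (b := aa)).exists_isMaxOn
      ⟨0, by rw [mem_Icc]; exact ⟨min_le_right _ _, le_max_right _ _⟩⟩ hcont.continuousOn
    set q := max (IAJA2.fA A x₀) (IAJA2.fA A 0) with hqdef
    have hqp : q < p := max_lt (hlt x₀) hf0lt
    have hq : ∀ x, IAJA2.fA A x ≤ q := by
      intro x
      by_cases hx : x ∈ Icc bb aa
      · exact (hx₀max hx).trans (le_max_left _ _)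
      · rw [mem_Icc, not_and_or] at hx
        rcases hx with hx | hx
        · push_neg at hx
          have : x ≤ b₁ := le_trans hx.le (min_le_left _ _)
          exact (hb₁ x this).le.trans (le_max_right _ _)
        · push_neg at hx
          have : a₁ ≤ x := le_trans (le_max_left _ _) hx.le
          exact (ha₁ x this).le.trans (le_max_right _ _)
    -- lower bound δ for T
    have h0 : Tendsto IAJA3.Hd (𝓝 1) (𝓝 0) := by
      rw [← IAJA3.Hd_one]; exact IAJA3.Hd_contAt
    have hev := h0.eventually_lt_const (sub_pos.2 hqp)
    rw [Metric.eventually_nhds_iff] at hev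
    obtain ⟨η, hη, hball⟩ := hev
    set η' := min η 1 / 2 with hη'def
    have hη'pos : 0 < η' := by
      have : 0 < min η 1 := lt_min hη one_pos
      positivity
    have hη'lt1 : η' < 1 := by
      have : min η 1 ≤ 1 := min_le_right _ _
      rw [hη'def]; linarith
    have hη'η : η' < η := by
      have : min η 1 ≤ η := min_le_left _ _
      rw [hη'def]; linarith
    set δ := 1 - (1 - η') ^ 2 with hδdef
    have hδpos : 0 < δ := by nlinarith
    have hδle1 : δ ≤ 1 := by nlinarith
    have hTval : ∀ y : ℝ, y ∈ Icc (0:ℝ) 1 → y < 1 → ∀ x : ℝ,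
        ((gaussianReal 0 1) ((fun z => (z - x) / Real.sqrt (1 - y)) '' A)).toReal
          = ∫ t in A, gaussianPDFReal x ⟨(Real.sqrt (1 - y)) ^ 2,
              sq_nonneg (Real.sqrt (1 - y))⟩ t := by
      intro y hy hy1 x
      have hspos : 0 < Real.sqrt (1 - y) := Real.sqrt_pos.2 (by linarith)
      have hvne : (⟨(Real.sqrt (1 - y)) ^ 2, sq_nonneg _⟩ : ℝ≥0) ≠ 0 := by
        intro h
        have h2 := congrArg NNReal.toReal h
        exact (pow_pos hspos 2).ne' h2
      rw [IAJA.measure_image_affine hAm x hspos, IAJA.toReal_eq x hvne]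
    have hTlower : ∀ y ∈ {y : ℝ | y ∈ Set.Icc (0:ℝ) 1 ∧
        p ≤ sSup (Set.range (fun x : ℝ =>
          ((gaussianReal 0 1)
            ((fun z => (z - x) / Real.sqrt (1 - y)) '' A)).toReal))}, δ ≤ y := by
      intro y hy
      by_contra hylt
      push_neg at hylt
      obtain ⟨hymem, hysup⟩ := hy
      have hy1 : y < 1 := lt_of_lt_of_le hylt hδle1
      set s := Real.sqrt (1 - y) with hsdef
      have hs0 : 0 < s := Real.sqrt_pos.2 (by linarith)
      have hs1 : s ≤ 1 := Real.sqrt_le_one.2 (by linarith [hymem.1])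
      have hsgt : 1 - η' < s := by
        have h1 : (1 - η') ^ 2 < 1 - y := by rw [hδdef] at hylt; linarith
        have h2 : Real.sqrt ((1 - η') ^ 2) < Real.sqrt (1 - y) :=
          Real.sqrt_lt_sqrt (sq_nonneg _) h1
        rwa [Real.sqrt_sq (by linarith)] at h2
      have hdist : dist s 1 < η := by
        rw [Real.dist_eq, abs_of_nonpos (by linarith)]
        linarith
      have hHs : IAJA3.Hd s < p - q := hball hdist
      have hgle : ∀ x : ℝ, ((gaussianReal 0 1)
          ((fun z => (z - x) / Real.sqrt (1 - y)) '' A)).toReal ≤ q + IAJA3.Hd s := by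
        intro x
        rw [hTval y hymem hy1 x]
        have hd := IAJA3.dil_bound (A := A) x s
        have hfa : (∫ t in A, gaussianPDFReal x 1 t) = IAJA2.fA A x := rfl
        rw [hfa] at hd
        exact hd.trans (by linarith [hq x])
      have hsup_le : sSup (Set.range (fun x : ℝ =>
          ((gaussianReal 0 1)
            ((fun z => (z - x) / Real.sqrt (1 - y)) '' A)).toReal)) ≤ q + IAJA3.Hd s := by
        apply csSup_le (range_nonempty _)
        rintro v ⟨x, rfl⟩
        exact hgle x
      linarith [hysup.trans hsup_le]
    -- T is nonempty: find y₀ < 1 in T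
    have hint : (interior A).Nonempty := by
      by_contra h
      rw [not_nonempty_iff_eq_empty] at h
      have hsubf : A ⊆ frontier A := by
        intro x hx
        have : x ∈ closure A \ interior A :=
          ⟨subset_closure hx, by rw [h]; exact notMem_empty x⟩
        exact this
      have hnull : volume A = 0 :=
        measure_mono_null hsubf ((IAJA.frontier_finite hA).measure_zero volume)
      have : gaussianReal 0 1 A = 0 := gaussianReal_absolutelyContinuous 0 one_ne_zero hnull
      rw [this] at hν
      simp at hν
    obtain ⟨z, hz⟩ := hint
    obtain ⟨r, hr, hball₀⟩ := Metric.isOpen_iff.1 isOpen_interior z hz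
    have hIoo : Ioo (z - r) (z + r) ⊆ A := by
      intro w hw
      apply interior_subset
      apply hball₀
      rw [Real.ball_eq_Ioo]
      exact hw
    obtain ⟨K, hKr, hK0, hKp⟩ := IAJA3.exists_K p hp1 r
    set s := r / K with hsdef
    have hs0 : 0 < s := div_pos hr hK0
    have hsK : s * K = r := by rw [hsdef]; field_simp
    have hs1 : s ≤ 1 := by rw [hsdef, div_le_one hK0]; exact hKr
    set y₀ := 1 - s ^ 2 with hy₀def
    have hy₀mem : y₀ ∈ Icc (0:ℝ) 1 := by
      constructor
      · rw [hy₀def]; nlinarith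
      · rw [hy₀def]; nlinarith
    have hy₀lt : y₀ < 1 := by rw [hy₀def]; nlinarith
    have hsqrt : Real.sqrt (1 - y₀) = s := by
      rw [hy₀def]
      have : (1:ℝ) - (1 - s ^ 2) = s ^ 2 := by ring
      rw [this, Real.sqrt_sq hs0.le]
    have himg : Ioo (-K) K ⊆ (fun w => (w - z) / Real.sqrt (1 - y₀)) '' A := by
      intro w hw
      rw [mem_Ioo] at hw
      refine ⟨s * w + z, ?_, ?_⟩
      · apply hIoo
        have h1 : s * (-K) < s * w := mul_lt_mul_of_pos_left hw.1 hs0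
        have h2 : s * w < s * K := mul_lt_mul_of_pos_left hw.2 hs0
        have e : s * (-K) = -(s * K) := by ring
        rw [e, hsK] at h1
        rw [hsK] at h2
        exact ⟨by linarith, by linarith⟩
      · rw [hsqrt]
        field_simp; ring
    have hx₀val : p ≤ ((gaussianReal 0 1)
        ((fun w => (w - z) / Real.sqrt (1 - y₀)) '' A)).toReal :=
      hKp.trans (ENNReal.toReal_mono (measure_ne_top _ _) (measure_mono himg))
    have hbdd : BddAbove (Set.range (fun x : ℝ =>
        ((gaussianReal 0 1)
          ((fun z => (z - x) / Real.sqrt (1 - y₀)) '' A)).toReal)) := by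
      refine ⟨1, ?_⟩
      rintro v ⟨x, rfl⟩
      exact htoReal_le_one _
    have hy₀T : y₀ ∈ {y : ℝ | y ∈ Set.Icc (0:ℝ) 1 ∧
        p ≤ sSup (Set.range (fun x : ℝ =>
          ((gaussianReal 0 1)
            ((fun z => (z - x) / Real.sqrt (1 - y)) '' A)).toReal))} := by
      refine ⟨hy₀mem, ?_⟩
      exact hx₀val.trans (le_csSup hbdd (mem_range_self z))
    constructor
    · exact lt_of_lt_of_le hδpos (le_csInf ⟨y₀, hy₀T⟩ hTlower)
    · exact lt_of_le_of_lt (csInf_le ⟨0, fun y hy => hy.1.1⟩ hy₀T) hy₀lt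
  · -- S nonempty case
    left
    refine ⟨hS, ?_⟩
    have hev := (hcont.continuousAt (x := 0)).eventually_lt_const hf0lt
    rw [Metric.eventually_nhds_iff] at hev
    obtain ⟨ε, hε, hball⟩ := hev
    apply lt_of_lt_of_le hε
    apply le_csInf (hS.image _)
    rintro w ⟨x, hxS, rfl⟩
    by_contra hlt
    push_neg at hlt
    have hd : dist x 0 < ε := by rwa [Real.dist_eq, sub_zero]
    have := hball hd
    rw [mem_setOf_eq, hval x] at hxS
    linarith
end

section
/- Let b, d be integers with 2 ≤ b < d, α > 1, and set Υ = 2(log b)(log d)/(α(log d - log b)). With t_n = ⌊(α/(2 log b)) log n - (2α/log b) log log n⌋ and s_n = ⌊(log log n + t_n log b)/log d⌋, one has as n → ∞: n^{α/2}/(t_n - s_n)^{α-1} = (1 + o(1)) Υ^{α-1} n^{α/2}/(log n)^{α-1}, and d^{s_n} = o(n^{α/2}/(t_n - s_n)^{α-1}) and b^{t_n} = o(d^{s_n}). -/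
open Filter Real

set_option maxHeartbeats 1000000 in
theorem scale_calibration
    (b d : ℕ) (hb : 2 ≤ b) (hbd : b < d) (α : ℝ) (hα : 1 < α)
    (t s : ℕ → ℝ) (Υ : ℝ)
    (ht : ∀ n, t n = ⌊(α / (2 * Real.log b)) * Real.log n -
      (2 * α / Real.log b) * Real.log (Real.log n)⌋)
    (hs : ∀ n, s n = ⌊(Real.log (Real.log n) + t n * Real.log b) / Real.log d⌋)
    (hΥ : Υ = 2 * Real.log b * Real.log d / (α * (Real.log d - Real.log b))) :
    Tendsto (fun n : ℕ => ((n : ℝ) ^ (α / 2) / (t n - s n) ^ (α - 1)) /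
        (Υ ^ (α - 1) * (n : ℝ) ^ (α / 2) / (Real.log n) ^ (α - 1)))
      atTop (nhds 1) ∧
    Tendsto (fun n : ℕ => (d : ℝ) ^ (s n) /
        ((n : ℝ) ^ (α / 2) / (t n - s n) ^ (α - 1))) atTop (nhds 0) ∧
    Tendsto (fun n : ℕ => (b : ℝ) ^ (t n) / (d : ℝ) ^ (s n)) atTop (nhds 0) := by
  have hb1 : (1:ℝ) < b := by exact_mod_cast lt_of_lt_of_le one_lt_two hb
  have hd1 : (1:ℝ) < d := by
    have : 2 ≤ d := le_trans hb (le_of_lt hbd)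
    exact_mod_cast lt_of_lt_of_le one_lt_two this
  have hlb : 0 < Real.log b := Real.log_pos hb1
  have hld : 0 < Real.log d := Real.log_pos hd1
  have hlbd : Real.log b < Real.log d := by
    apply Real.log_lt_log (by positivity)
    exact_mod_cast hbd
  have hα0 : 0 < α := lt_trans one_pos hα
  have hΥpos : 0 < Υ := by
    rw [hΥ]
    exact div_pos (by positivity) (mul_pos hα0 (by linarith))
  set lb := Real.log b with hlbdef
  set ld := Real.log d with hlddef
  set L : ℕ → ℝ := fun n => Real.log n with hLdef
  set M : ℕ → ℝ := fun n => Real.log (Real.log n) with hMdef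
  set A : ℕ → ℝ := fun n => (α / (2 * lb)) * L n - (2 * α / lb) * M n with hAdef
  -- floor bounds
  have htA1 : ∀ n, A n - 1 < t n := fun n => by
    rw [ht n]; exact_mod_cast Int.sub_one_lt_floor _
  have htA2 : ∀ n, t n ≤ A n := fun n => by
    rw [ht n]; exact_mod_cast Int.floor_le _
  have hsB1 : ∀ n, M n + t n * lb - ld < s n * ld := by
    intro n
    have h1 : (M n + t n * lb) / ld - 1 < s n := by
      rw [hs n]; exact_mod_cast Int.sub_one_lt_floor _
    have := (mul_lt_mul_iff_of_pos_right hld).mpr h1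
    rw [sub_mul, div_mul_cancel₀ _ (ne_of_gt hld), one_mul] at this
    linarith
  have hsB2 : ∀ n, s n * ld ≤ M n + t n * lb := by
    intro n
    have h1 : s n ≤ (M n + t n * lb) / ld := by
      rw [hs n]; exact_mod_cast Int.floor_le _
    have := (mul_le_mul_iff_of_pos_right hld).mpr h1
    rwa [div_mul_cancel₀ _ (ne_of_gt hld)] at this
  have hLtop : Tendsto L atTop atTop :=
    Real.tendsto_log_atTop.comp tendsto_natCast_atTop_atTop
  have hML : Tendsto (fun n => M n / L n) atTop (nhds 0) :=
    Real.isLittleO_log_id_atTop.tendsto_div_nhds_zero.comp hLtop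
  have hinvL : Tendsto (fun n => 1 / L n) atTop (nhds 0) :=
    tendsto_const_nhds.div_atTop hLtop
  have key : ∀ (c₁ c₂ : ℝ),
      Tendsto (fun n => 1 + c₁ * (M n / L n) + c₂ * (1 / L n)) atTop (nhds 1) := by
    intro c₁ c₂
    have := ((tendsto_const_nhds (x := (1:ℝ)) (f := atTop)).add
      (hML.const_mul c₁)).add (hinvL.const_mul c₂)
    simpa using this
  set E : ℕ → ℝ := fun n => Υ * (t n - s n) / L n with hEdef
  have hLpos : ∀ᶠ n : ℕ in atTop, 1 < L n := hLtop.eventually_gt_atTop 1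
  -- E tends to 1
  have hE : Tendsto E atTop (nhds 1) := by
    set c₁ : ℝ := -(4 + 2 * lb / (α * (ld - lb))) with hc₁
    have hlow : ∀ᶠ n : ℕ in atTop,
        1 + c₁ * (M n / L n) + (-(2 * lb / α)) * (1 / L n) ≤ E n := by
      filter_upwards [hLpos] with n hL
      have hprod : (A n - 1) * (ld - lb) ≤ t n * (ld - lb) :=
        mul_le_mul_of_nonneg_right (le_of_lt (htA1 n)) (by linarith)
      have h1 : ((A n - 1) * (ld - lb) - M n) / ld ≤ t n - s n := by
        rw [div_le_iff₀ hld]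
        have := hsB2 n
        nlinarith
      have h2 : Υ * (((A n - 1) * (ld - lb) - M n) / ld) / L n ≤ E n := by
        apply div_le_div_of_nonneg_right _ (by linarith)
        exact mul_le_mul_of_nonneg_left h1 (le_of_lt hΥpos)
      refine le_trans (le_of_eq ?_) h2
      rw [hΥ, hc₁]
      simp only [hAdef]
      have hL0 : L n ≠ 0 := by linarith
      have hdlb : ld - lb ≠ 0 := sub_ne_zero.mpr (ne_of_gt hlbd)
      field_simp [ne_of_gt hlb, ne_of_gt hld, ne_of_gt hα0, hdlb]
      ring
    have hupp : ∀ᶠ n : ℕ in atTop,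
        E n ≤ 1 + c₁ * (M n / L n) + (2 * lb * ld / (α * (ld - lb))) * (1 / L n) := by
      filter_upwards [hLpos] with n hL
      have hprod : t n * (ld - lb) ≤ A n * (ld - lb) :=
        mul_le_mul_of_nonneg_right (htA2 n) (by linarith)
      have h1 : t n - s n ≤ (A n * (ld - lb) - M n) / ld + 1 := by
        rw [← sub_le_iff_le_add, le_div_iff₀ hld]
        nlinarith [hsB1 n, hprod]
      have h2 : E n ≤ Υ * ((A n * (ld - lb) - M n) / ld + 1) / L n := by
        apply div_le_div_of_nonneg_right _ (by linarith)
        exact mul_le_mul_of_nonneg_left h1 (le_of_lt hΥpos)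
      refine le_trans h2 (le_of_eq ?_)
      rw [hΥ, hc₁]
      simp only [hAdef]
      have hL0 : L n ≠ 0 := by linarith
      have hdlb : ld - lb ≠ 0 := sub_ne_zero.mpr (ne_of_gt hlbd)
      field_simp [ne_of_gt hlb, ne_of_gt hld, ne_of_gt hα0, hdlb]
      ring
    exact tendsto_of_tendsto_of_tendsto_of_le_of_le' (key _ _) (key _ _) hlow hupp
  have hEhalf : ∀ᶠ n : ℕ in atTop, 1/2 < E n :=
    hE.eventually (eventually_gt_nhds (by norm_num))
  have hE2 : ∀ᶠ n : ℕ in atTop, E n ≤ 2 :=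
    (hE.eventually (eventually_lt_nhds (by norm_num))).mono fun n h => le_of_lt h
  have hts : ∀ᶠ n : ℕ in atTop, 0 < t n - s n := by
    filter_upwards [hEhalf, hLpos] with n h1 h2
    have h3 : 0 < Υ * (t n - s n) / L n := lt_trans (by norm_num) h1
    have h4 : 0 < Υ * (t n - s n) := by
      have := mul_pos h3 (show (0:ℝ) < L n by linarith)
      rwa [div_mul_cancel₀ _ (by linarith : L n ≠ 0)] at this
    by_contra hc
    push_neg at hc
    nlinarith
  have hn1 : ∀ᶠ n : ℕ in atTop, (1:ℝ) ≤ n := by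
    filter_upwards [eventually_ge_atTop 1] with n h
    exact_mod_cast h
  -- Part 1
  have part1 : Tendsto (fun n : ℕ => ((n : ℝ) ^ (α / 2) / (t n - s n) ^ (α - 1)) /
      (Υ ^ (α - 1) * (n : ℝ) ^ (α / 2) / (L n) ^ (α - 1))) atTop (nhds 1) := by
    have hinner : Tendsto (fun n => (E n)⁻¹) atTop (nhds 1) := by
      have := hE.inv₀ one_ne_zero
      simpa using this
    have hcomp : Tendsto (fun n => ((E n)⁻¹) ^ (α - 1)) atTop (nhds 1) := by
      have hcont := (Real.continuousAt_rpow_const 1 (α - 1)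
        (Or.inl one_ne_zero)).tendsto
      have := hcont.comp hinner
      simpa [Function.comp_def] using this
    apply hcomp.congr'
    filter_upwards [hts, hLpos, hn1] with n h1 h2 h3
    have hnpos : (0:ℝ) < (n:ℝ) ^ (α / 2) := Real.rpow_pos_of_pos (by linarith) _
    have htspos : (0:ℝ) < (t n - s n) ^ (α - 1) := Real.rpow_pos_of_pos h1 _
    have hLp : (0:ℝ) < (L n) ^ (α - 1) := Real.rpow_pos_of_pos (by linarith) _
    have hΥp : (0:ℝ) < Υ ^ (α - 1) := Real.rpow_pos_of_pos hΥpos _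
    have hEinv : (E n)⁻¹ = L n / (Υ * (t n - s n)) := by
      rw [hEdef]; rw [inv_div]
    rw [hEinv, Real.div_rpow (by linarith) (by positivity), Real.mul_rpow (le_of_lt hΥpos) (le_of_lt h1)]
    field_simp
  refine ⟨part1, ?_, ?_⟩
  -- Part 2
  · have hbound : Tendsto (fun n : ℕ => (2 / Υ) ^ (α - 1) * (L n) ^ (-α)) atTop (nhds 0) := by
      have := ((tendsto_rpow_neg_atTop hα0).comp hLtop).const_mul ((2 / Υ) ^ (α - 1))
      simpa using this
    apply tendsto_of_tendsto_of_tendsto_of_le_of_le' tendsto_const_nhds hbound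
    · filter_upwards [hts] with n h1
      have : (0:ℝ) ≤ (t n - s n) ^ (α - 1) := Real.rpow_nonneg (le_of_lt h1) _
      positivity
    · filter_upwards [hts, hLpos, hn1, hE2] with n h1 h2 h3 h4
      have hLp : (0:ℝ) < L n := by linarith
      have hnpos : (0:ℝ) < (n:ℝ) ^ (α / 2) := Real.rpow_pos_of_pos (by linarith) _
      -- d ^ s n ≤ n^(α/2) * L n ^ (1 - 2α)
      have hd1 : (d:ℝ) ^ (s n) ≤ (n:ℝ) ^ (α / 2) * (L n) ^ (1 - 2 * α) := by
        have e1 : (d:ℝ) ^ (s n) = Real.exp (s n * ld) := by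
          rw [Real.rpow_def_of_pos (by linarith : (0:ℝ) < (d:ℝ))]
          rw [← hlddef, mul_comm]
        have h6 : t n * lb ≤ A n * lb := mul_le_mul_of_nonneg_right (htA2 n) (le_of_lt hlb)
        have h7 : A n * lb = α / 2 * L n - 2 * α * M n := by
          rw [hAdef]; field_simp
        have e2 : s n * ld ≤ α / 2 * L n + (1 - 2 * α) * M n := by
          calc s n * ld ≤ M n + t n * lb := hsB2 n
            _ ≤ M n + (α / 2 * L n - 2 * α * M n) := by
                have := h7 ▸ h6
                linarith
            _ = α / 2 * L n + (1 - 2 * α) * M n := by ring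
        have e3 : Real.exp (α / 2 * L n + (1 - 2 * α) * M n)
            = (n:ℝ) ^ (α / 2) * (L n) ^ (1 - 2 * α) := by
          rw [Real.exp_add, mul_comm (α/2) (L n), mul_comm (1 - 2*α) (M n),
            Real.exp_mul, Real.exp_mul]
          rw [hLdef, hMdef]
          rw [Real.exp_log (by exact_mod_cast (by linarith : (0:ℝ) < (n:ℝ))),
            Real.exp_log hLp]
        rw [e1, ← e3]
        exact Real.exp_le_exp.mpr e2
      have hts2 : t n - s n ≤ 2 / Υ * L n := by
        have : Υ * (t n - s n) / L n ≤ 2 := h4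
        rw [div_le_iff₀ hLp] at this
        rw [div_mul_eq_mul_div, le_div_iff₀ hΥpos]
        linarith [this]
      have hts3 : (t n - s n) ^ (α - 1) ≤ (2 / Υ) ^ (α - 1) * (L n) ^ (α - 1) := by
        rw [← Real.mul_rpow (by positivity) (le_of_lt hLp)]
        exact Real.rpow_le_rpow (le_of_lt h1) hts2 (by linarith)
      have htspos : (0:ℝ) < (t n - s n) ^ (α - 1) := Real.rpow_pos_of_pos h1 _
      calc (d:ℝ) ^ (s n) / ((n:ℝ) ^ (α / 2) / (t n - s n) ^ (α - 1))
          = (d:ℝ) ^ (s n) * (t n - s n) ^ (α - 1) / (n:ℝ) ^ (α / 2) := by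
            rw [div_div_eq_mul_div]
        _ ≤ ((n:ℝ) ^ (α / 2) * (L n) ^ (1 - 2 * α)) * ((2 / Υ) ^ (α - 1) * (L n) ^ (α - 1))
            / (n:ℝ) ^ (α / 2) := by
            apply div_le_div_of_nonneg_right _ hnpos.le
            apply mul_le_mul hd1 hts3 (le_of_lt htspos)
            positivity
        _ = (2 / Υ) ^ (α - 1) * ((L n) ^ (1 - 2 * α) * (L n) ^ (α - 1)) := by
            field_simp
        _ = (2 / Υ) ^ (α - 1) * (L n) ^ (-α) := by
            rw [← Real.rpow_add hLp, show 1 - 2*α + (α - 1) = -α by ring]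
  -- Part 3
  · have hbound : Tendsto (fun n : ℕ => (d:ℝ) / L n) atTop (nhds 0) :=
      tendsto_const_nhds.div_atTop hLtop
    apply tendsto_of_tendsto_of_tendsto_of_le_of_le' tendsto_const_nhds hbound
    · filter_upwards with n
      have h1 : (0:ℝ) ≤ (b:ℝ) ^ (t n) := Real.rpow_nonneg (by positivity) _
      have h2 : (0:ℝ) ≤ (d:ℝ) ^ (s n) := Real.rpow_nonneg (by positivity) _
      positivity
    · filter_upwards [hLpos] with n hL
      have hLp : (0:ℝ) < L n := by linarith
      have e1 : (b:ℝ) ^ (t n) = Real.exp (t n * lb) := by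
        rw [Real.rpow_def_of_pos (by linarith : (0:ℝ) < (b:ℝ)), ← hlbdef, mul_comm]
      have e2 : (d:ℝ) ^ (s n) = Real.exp (s n * ld) := by
        rw [Real.rpow_def_of_pos (by linarith : (0:ℝ) < (d:ℝ)), ← hlddef, mul_comm]
      have h5 := hsB1 n
      calc (b:ℝ) ^ (t n) / (d:ℝ) ^ (s n)
          ≤ Real.exp (t n * lb) / Real.exp (M n + t n * lb - ld) := by
            rw [e1, e2]
            apply div_le_div_of_nonneg_left (le_of_lt (Real.exp_pos _)) (Real.exp_pos _)
            exact Real.exp_le_exp.mpr (le_of_lt h5)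
        _ = (d:ℝ) / L n := by
            rw [← Real.exp_sub]
            have : t n * lb - (M n + t n * lb - ld) = ld - M n := by ring
            rw [this, Real.exp_sub, hlddef, hMdef,
              Real.exp_log (by linarith : (0:ℝ) < (d:ℝ)), Real.exp_log hLp]
end
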